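/- arXiv:2402.16783 — 3 statements merged into one kernel-verified Lean document; each statement's English description precedes it below -/
import Mathlib

section
/- Let P be the uniform distribution on the closed interval [a,b] and let c,d ∈ [a,b] with a < c < d < b. For n ∈ ℕ with n ≥ 2, let α_n be a conditional unconstrained optimal set of n-points for P with respect to the conditional set β = {c,d} such that α_n contains k elements of [a,c], ℓ elements of [c,d], and m elements of [d,b] for some k,ℓ,m ∈ ℕ with k,m ≥ 1 and ℓ ≥ 2. Then k+ℓ+m = n+2, α_n ∩ [a,c] = {a + (2j−1)(c−a)/(2k−1) : 1 ≤ j ≤ k}, α_n ∩ [c,d] = {c + ((j−1)/(ℓ−1))(d−c) : 1 ≤ j ≤ ℓ}, α_n ∩ [d,b] = {d + 2(j−1)(b−d)/(2m−1) : 1 ≤ j ≤ m}, and the n-th conditional unconstrained quantization error equals (1/(3(b−a)))·((c−a)³/(2k−1)² + (1/4)·(d−c)³/(ℓ−1)² + (b−d)³/(2m−1)²). -/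
open MeasureTheory Set Filter

/-- The uniform distribution on `[a, b]`: normalized Lebesgue measure restricted to `[a, b]`. -/
noncomputable def uniformOn (a b : ℝ) : Measure ℝ :=
  (ENNReal.ofReal (b - a))⁻¹ • volume.restrict (Set.Icc a b)

/-- The distortion error of a set `s` of points for the measure `P`:
`∫ min_{a ∈ s} (x - a)² dP(x)`. -/
noncomputable def distortion (P : Measure ℝ) (s : Set ℝ) : ℝ :=
  ∫ x, sInf ((fun a => (x - a) ^ 2) '' s) ∂P

/-- The `n`-th conditional (unconstrained) quantization error for `P` with respect to
the conditional set `β`. -/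
noncomputable def condQuantError (P : Measure ℝ) (β : Set ℝ) (n : ℕ) : ℝ :=
  sInf { v : ℝ | ∃ α : Set ℝ, α.Finite ∧ α.ncard ≤ n - β.ncard ∧ v = distortion P (α ∪ β) }


noncomputable def dS (Q : Set ℝ) (x : ℝ) : ℝ := sInf ((fun q => (x - q) ^ 2) '' Q)

lemma dS_bddBelow (Q : Set ℝ) (x : ℝ) : BddBelow ((fun q => (x - q) ^ 2) '' Q) := by
  refine ⟨0, ?_⟩; rintro _ ⟨q, -, rfl⟩; positivity

lemma dS_nonneg (Q : Set ℝ) (x : ℝ) : 0 ≤ dS Q x := by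
  rcases Q.eq_empty_or_nonempty with rfl | hQ
  · simp [dS, Real.sInf_empty]
  · exact le_csInf (hQ.image _) (by rintro _ ⟨q, -, rfl⟩; positivity)

lemma dS_le {Q : Set ℝ} {q : ℝ} (hq : q ∈ Q) (x : ℝ) : dS Q x ≤ (x - q) ^ 2 :=
  csInf_le (dS_bddBelow Q x) ⟨q, hq, rfl⟩

lemma dS_mono {Q Q' : Set ℝ} {x : ℝ} (hQ : Q.Nonempty)
    (h : ∀ p ∈ Q, ∃ q ∈ Q', (x - q) ^ 2 ≤ (x - p) ^ 2) : dS Q' x ≤ dS Q x := by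
  refine le_csInf (hQ.image _) ?_
  rintro _ ⟨p, hp, rfl⟩
  obtain ⟨q, hq, hle⟩ := h p hp
  exact (dS_le hq x).trans hle

lemma dS_subset {Q Q' : Set ℝ} (h : Q ⊆ Q') (hQ : Q.Nonempty) (x : ℝ) : dS Q' x ≤ dS Q x :=
  dS_mono hQ (fun p hp => ⟨p, h hp, le_rfl⟩)

lemma dS_singleton (q x : ℝ) : dS {q} x = (x - q) ^ 2 := by
  simp [dS]

lemma dS_insert {Q : Set ℝ} (hQ : Q.Nonempty) (p x : ℝ) :
    dS (insert p Q) x = min ((x - p) ^ 2) (dS Q x) := by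
  rw [dS, Set.image_insert_eq, csInf_insert (dS_bddBelow Q x) (hQ.image _)]
  rfl

lemma dS_continuous {Q : Set ℝ} (hfin : Q.Finite) (hne : Q.Nonempty) : Continuous (dS Q) := by
  lift Q to Finset ℝ using hfin
  classical
  induction Q using Finset.induction_on with
  | empty => simp at hne
  | @insert p t hnotmem ih =>
    rcases t.eq_empty_or_nonempty with rfl | htne
    · have : dS ({p} : Set ℝ) = fun x => (x - p) ^ 2 := funext fun x => dS_singleton p x
      rw [show ((insert p (∅ : Finset ℝ) : Finset ℝ) : Set ℝ) = {p} by simp, this]; fun_prop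
    · have h1 : Continuous (dS (t : Set ℝ)) := ih (by exact_mod_cast htne)
      have : (fun x => dS (insert p (t : Set ℝ)) x)
          = fun x => min ((x - p) ^ 2) (dS (t : Set ℝ) x) := by
        funext x; exact dS_insert (by exact_mod_cast htne) p x
      rw [show ((insert p t : Finset ℝ) : Set ℝ) = insert p (t : Set ℝ) by simp]
      rw [show dS (insert p (t : Set ℝ)) = fun x => min ((x - p) ^ 2) (dS (t : Set ℝ) x) from this]
      exact Continuous.min (by fun_prop) h1

lemma dS_eq_right {Q : Set ℝ} {q x : ℝ} (hsub : Q ⊆ Set.Ici q) (hq : q ∈ Q) (hx : x ≤ q) :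
    dS Q x = (x - q) ^ 2 := by
  refine le_antisymm (dS_le hq x) (le_csInf ⟨_, Set.mem_image_of_mem _ hq⟩ ?_)
  rintro _ ⟨p, hp, rfl⟩
  have : q ≤ p := hsub hp
  show (x - q) ^ 2 ≤ (x - p) ^ 2
  nlinarith

lemma dS_eq_left {Q : Set ℝ} {q x : ℝ} (hsub : Q ⊆ Set.Iic q) (hq : q ∈ Q) (hx : q ≤ x) :
    dS Q x = (x - q) ^ 2 := by
  refine le_antisymm (dS_le hq x) (le_csInf ⟨_, Set.mem_image_of_mem _ hq⟩ ?_)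
  rintro _ ⟨p, hp, rfl⟩
  have : p ≤ q := hsub hp
  show (x - q) ^ 2 ≤ (x - p) ^ 2
  nlinarith

lemma integ_dS {Q : Set ℝ} (hfin : Q.Finite) (hne : Q.Nonempty) (u v : ℝ) :
    IntervalIntegrable (dS Q) volume u v :=
  (dS_continuous hfin hne).intervalIntegrable u v

lemma int_sq (u v q : ℝ) : ∫ x in u..v, (x - q) ^ 2 = ((v - q) ^ 3 - (u - q) ^ 3) / 3 := by
  have := intervalIntegral.integral_comp_sub_right (fun y : ℝ => y ^ 2) q (a := u) (b := v)
  rw [this, integral_pow]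
  norm_num

lemma int_cell {u v : ℝ} (huv : u ≤ v) :
    ∫ x in u..v, min ((x - u) ^ 2) ((x - v) ^ 2) = (v - u) ^ 3 / 12 := by
  set w := (u + v) / 2 with hw
  have huw : u ≤ w := by simp [hw]; linarith
  have hwv : w ≤ v := by simp [hw]; linarith
  have hint : Continuous fun x : ℝ => min ((x - u) ^ 2) ((x - v) ^ 2) := by
    exact Continuous.min (by fun_prop) (by fun_prop)
  have hsplit := intervalIntegral.integral_add_adjacent_intervals
    (hint.intervalIntegrable (μ := volume) u w) (hint.intervalIntegrable (μ := volume) w v)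
  have h1 : ∫ x in u..w, min ((x - u) ^ 2) ((x - v) ^ 2) = ∫ x in u..w, (x - u) ^ 2 := by
    refine intervalIntegral.integral_congr ?_
    intro x hx
    rw [Set.uIcc_of_le huw] at hx
    have h1 : u ≤ x := hx.1
    have h2 : x ≤ w := hx.2
    have : (x - u) ^ 2 ≤ (x - v) ^ 2 := by nlinarith
    simp [min_eq_left this]
  have h2 : ∫ x in w..v, min ((x - u) ^ 2) ((x - v) ^ 2) = ∫ x in w..v, (x - v) ^ 2 := by
    refine intervalIntegral.integral_congr ?_
    intro x hx
    rw [Set.uIcc_of_le hwv] at hx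
    have h1 : w ≤ x := hx.1
    have h2 : x ≤ v := hx.2
    have : (x - v) ^ 2 ≤ (x - u) ^ 2 := by nlinarith
    simp [min_eq_right this]
  rw [← hsplit, h1, h2, int_sq, int_sq, hw]
  ring

lemma cube_tangent {x x0 : ℝ} (hx : 0 ≤ x) (hx0 : 0 ≤ x0) :
    3 * x0 ^ 2 * x - 2 * x0 ^ 3 ≤ x ^ 3 ∧
    (3 * x0 ^ 2 * x - 2 * x0 ^ 3 = x ^ 3 → x = x0) := by
  constructor
  · nlinarith [sq_nonneg (x - x0), sq_nonneg (x + x0)]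
  · intro h
    have hfac : (x - x0) ^ 2 * (x + 2 * x0) = 0 := by nlinarith
    rcases mul_eq_zero.mp hfac with h1 | h2
    · have := pow_eq_zero_iff (n := 2) (by norm_num) |>.mp h1
      linarith
    · nlinarith

lemma tangentB {t s L j : ℝ} (hj : 1 ≤ j) (ht : 0 ≤ t) (hs : 0 ≤ s) (hL : t + s = L) :
    L ^ 3 / (12 * (j + 1) ^ 2) ≤ t ^ 3 / 12 + s ^ 3 / (12 * j ^ 2) ∧
    (t ^ 3 / 12 + s ^ 3 / (12 * j ^ 2) = L ^ 3 / (12 * (j + 1) ^ 2) → t = L / (j + 1)) := by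
  subst hL
  have hj0 : (0:ℝ) < j := by linarith
  have hj1 : (0:ℝ) < j + 1 := by linarith
  have hL0 : 0 ≤ t + s := by linarith
  have h1 := cube_tangent ht (show (0:ℝ) ≤ (t+s) / (j+1) by positivity)
  have h2 := cube_tangent hs (show (0:ℝ) ≤ j * (t+s) / (j+1) by positivity)
  have e2' : (3 * (j*(t+s)/(j+1))^2 * s - 2 * (j*(t+s)/(j+1))^3) / j ^ 2 ≤ s ^ 3 / j ^ 2 :=
    div_le_div_of_nonneg_right h2.1 (by positivity)
  have key : 3 * ((t+s)/(j+1))^2 * t - 2 * ((t+s)/(j+1))^3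
      + (3 * (j*(t+s)/(j+1))^2 * s - 2 * (j*(t+s)/(j+1))^3) / j ^ 2
      = 12 * ((t+s) ^ 3 / (12 * (j + 1) ^ 2)) := by
    field_simp
    ring
  have hsplit : t ^ 3 / 12 + s ^ 3 / (12 * j ^ 2) = (t ^ 3 + s ^ 3 / j ^ 2) / 12 := by
    ring
  constructor
  · rw [hsplit]
    linarith [h1.1, e2']
  · intro heq
    by_contra hne
    have e1 : 3 * ((t+s)/(j+1))^2 * t - 2 * ((t+s)/(j+1))^3 < t ^ 3 := lt_of_le_of_ne h1.1
      (fun h => hne (h1.2 h))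
    rw [hsplit] at heq
    linarith [heq.le, e1, e2']

lemma tangentA {t s L j : ℝ} (hj : 1 ≤ j) (ht : 0 ≤ t) (hs : 0 ≤ s) (hL : t + s = L) :
    L ^ 3 / (3 * (2*j + 1) ^ 2) ≤ t ^ 3 / 3 + s ^ 3 / (12 * j ^ 2) ∧
    (t ^ 3 / 3 + s ^ 3 / (12 * j ^ 2) = L ^ 3 / (3 * (2*j + 1) ^ 2) → t = L / (2*j + 1)) := by
  subst hL
  have hj0 : (0:ℝ) < j := by linarith
  have hj1 : (0:ℝ) < 2*j + 1 := by linarith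
  have hL0 : 0 ≤ t + s := by linarith
  have h1 := cube_tangent ht (show (0:ℝ) ≤ (t+s) / (2*j+1) by positivity)
  have h2 := cube_tangent hs (show (0:ℝ) ≤ 2*j * (t+s) / (2*j+1) by positivity)
  have e2' : (3 * (2*j*(t+s)/(2*j+1))^2 * s - 2 * (2*j*(t+s)/(2*j+1))^3) / (4 * j ^ 2)
      ≤ s ^ 3 / (4 * j ^ 2) := div_le_div_of_nonneg_right h2.1 (by positivity)
  have key : (3 * ((t+s)/(2*j+1))^2 * t - 2 * ((t+s)/(2*j+1))^3)
      + (3 * (2*j*(t+s)/(2*j+1))^2 * s - 2 * (2*j*(t+s)/(2*j+1))^3) / (4 * j ^ 2)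
      = 3 * ((t+s) ^ 3 / (3 * (2*j + 1) ^ 2)) := by
    field_simp
    ring
  have hsplit : t ^ 3 / 3 + s ^ 3 / (12 * j ^ 2) = (t ^ 3 + s ^ 3 / (4 * j ^ 2)) / 3 := by
    ring
  constructor
  · rw [hsplit]
    linarith [h1.1, e2']
  · intro heq
    by_contra hne
    have e1 : 3 * ((t+s)/(2*j+1))^2 * t - 2 * ((t+s)/(2*j+1))^3 < t ^ 3 := lt_of_le_of_ne h1.1
      (fun h => hne (h1.2 h))
    rw [hsplit] at heq
    linarith [heq.le, e1, e2']

noncomputable def midGrid (c d : ℝ) (l : ℕ) : Set ℝ :=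
  (fun j : ℕ => c + (((j : ℝ) - 1) / ((l : ℝ) - 1)) * (d - c)) '' Set.Icc 1 l

noncomputable def leftGrid (a c : ℝ) (k : ℕ) : Set ℝ :=
  (fun j : ℕ => a + (2 * (j : ℝ) - 1) * (c - a) / (2 * (k : ℝ) - 1)) '' Set.Icc 1 k

noncomputable def rightGrid (d b : ℝ) (m : ℕ) : Set ℝ :=
  (fun j : ℕ => d + 2 * ((j : ℝ) - 1) * (b - d) / (2 * (m : ℝ) - 1)) '' Set.Icc 1 m

lemma midGrid_finite (c d : ℝ) (l : ℕ) : (midGrid c d l).Finite :=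
  (Set.finite_Icc 1 l).image _

lemma leftGrid_finite (a c : ℝ) (k : ℕ) : (leftGrid a c k).Finite :=
  (Set.finite_Icc 1 k).image _

lemma rightGrid_finite (d b : ℝ) (m : ℕ) : (rightGrid d b m).Finite :=
  (Set.finite_Icc 1 m).image _

lemma midGrid_left_mem {c d : ℝ} {l : ℕ} (hl : 1 ≤ l) : c ∈ midGrid c d l :=
  ⟨1, ⟨le_rfl, hl⟩, by norm_num⟩

lemma midGrid_right_mem {c d : ℝ} {l : ℕ} (hl : 2 ≤ l) : d ∈ midGrid c d l := by
  have h2 : ((l : ℝ) - 1) ≠ 0 := by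
    have : (2:ℝ) ≤ l := by exact_mod_cast hl
    linarith
  exact ⟨l, ⟨by omega, le_rfl⟩, by field_simp; ring⟩

lemma midGrid_subset {c d : ℝ} {l : ℕ} (hcd : c ≤ d) (hl : 2 ≤ l) :
    midGrid c d l ⊆ Set.Icc c d := by
  rintro _ ⟨j, ⟨hj1, hj2⟩, rfl⟩
  have hlR : (2:ℝ) ≤ l := by exact_mod_cast hl
  have hjR : (1:ℝ) ≤ (j:ℝ) := by exact_mod_cast hj1
  have hjl : (j:ℝ) ≤ (l:ℝ) := by exact_mod_cast hj2
  have h0 : 0 ≤ ((j:ℝ) - 1) / ((l:ℝ) - 1) := by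
    apply div_nonneg <;> linarith
  have h1 : ((j:ℝ) - 1) / ((l:ℝ) - 1) ≤ 1 := by
    rw [div_le_one (by linarith)]; linarith
  constructor
  · nlinarith
  · nlinarith

lemma midGrid_two {c d : ℝ} : midGrid c d 2 = {c, d} := by
  ext x
  simp only [midGrid, Set.mem_image, Set.mem_Icc, Set.mem_insert_iff, Set.mem_singleton_iff]
  constructor
  · rintro ⟨j, ⟨hj1, hj2⟩, rfl⟩
    interval_cases j
    · left; norm_num
    · right; norm_num
  · rintro (rfl | rfl)
    · exact ⟨1, by norm_num⟩
    · exact ⟨2, by norm_num⟩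

lemma midGrid_ncard {c d : ℝ} {l : ℕ} (hcd : c < d) (hl : 2 ≤ l) :
    (midGrid c d l).ncard = l := by
  have h2 : ((l : ℝ) - 1) ≠ 0 := by
    have : (2:ℝ) ≤ l := by exact_mod_cast hl
    linarith
  rw [midGrid, Set.ncard_image_of_injOn, Set.ncard_eq_toFinset_card']
  · simp
  · intro j1 _ j2 _ heq
    have : ((j1:ℝ) - 1) / ((l:ℝ) - 1) * (d - c) = ((j2:ℝ) - 1) / ((l:ℝ) - 1) * (d - c) := by
      linarith [heq]
    have hdc : d - c ≠ 0 := by linarith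
    have : (j1 : ℝ) = (j2 : ℝ) := by
      have h' := mul_right_cancel₀ hdc this
      rw [div_left_inj' h2] at h'
      linarith
    exact_mod_cast this

lemma midGrid_insert {c d : ℝ} {l : ℕ} (hl : 2 ≤ l) :
    insert c (midGrid (c + (d - c) / (l : ℝ)) d l) = midGrid c d (l + 1) := by
  have hl0 : ((l:ℝ)) ≠ 0 := by positivity
  have hl2 : (2:ℝ) ≤ l := by exact_mod_cast hl
  have hl1 : ((l : ℝ) - 1) ≠ 0 := by linarith
  ext x
  simp only [midGrid, Set.mem_image, Set.mem_insert_iff, Set.mem_Icc]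
  constructor
  · rintro (rfl | ⟨i, ⟨hi1, hi2⟩, rfl⟩)
    · exact ⟨1, ⟨le_rfl, by omega⟩, by norm_num⟩
    · refine ⟨i + 1, ⟨by omega, by omega⟩, ?_⟩
      push_cast
      simp only [add_sub_cancel_right]
      field_simp
      ring
  · rintro ⟨i, ⟨hi1, hi2⟩, rfl⟩
    rcases eq_or_lt_of_le hi1 with h1 | h1
    · left; rw [← h1]; norm_num
    · right
      refine ⟨i - 1, ⟨by omega, by omega⟩, ?_⟩
      have hcast : ((i - 1 : ℕ) : ℝ) = (i : ℝ) - 1 := by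
        have : 1 ≤ i := hi1
        push_cast [this]
        ring
      rw [hcast]
      push_cast
      simp only [add_sub_cancel_right]
      field_simp
      ring

lemma ncard_Icc_one (K : ℕ) : (Set.Icc 1 K).ncard = K := by
  rw [Set.ncard_eq_toFinset_card']
  simp

lemma leftGrid_one {a c : ℝ} : leftGrid a c 1 = {c} := by
  ext x
  simp only [leftGrid, Set.mem_image, Set.mem_Icc, Set.mem_singleton_iff]
  constructor
  · rintro ⟨j, ⟨hj1, hj2⟩, rfl⟩
    interval_cases j
    norm_num
  · rintro rfl
    exact ⟨1, by norm_num⟩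

lemma rightGrid_one {d b : ℝ} : rightGrid d b 1 = {d} := by
  ext x
  simp only [rightGrid, Set.mem_image, Set.mem_Icc, Set.mem_singleton_iff]
  constructor
  · rintro ⟨j, ⟨hj1, hj2⟩, rfl⟩
    interval_cases j
    norm_num
  · rintro rfl
    exact ⟨1, by norm_num⟩

lemma leftGrid_right_mem {a c : ℝ} {k : ℕ} (hk : 1 ≤ k) : c ∈ leftGrid a c k := by
  have h1 : (1:ℝ) ≤ k := by exact_mod_cast hk
  have h2 : 2 * (k:ℝ) - 1 ≠ 0 := by linarith
  exact ⟨k, ⟨hk, le_rfl⟩, by field_simp; ring⟩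

lemma rightGrid_left_mem {d b : ℝ} {m : ℕ} (hm : 1 ≤ m) : d ∈ rightGrid d b m :=
  ⟨1, ⟨le_rfl, hm⟩, by norm_num⟩

lemma leftGrid_subset {a c : ℝ} {k : ℕ} (hac : a ≤ c) (hk : 1 ≤ k) :
    leftGrid a c k ⊆ Set.Icc a c := by
  rintro _ ⟨j, ⟨hj1, hj2⟩, rfl⟩
  have h1 : (1:ℝ) ≤ (j:ℝ) := by exact_mod_cast hj1
  have h2 : (j:ℝ) ≤ (k:ℝ) := by exact_mod_cast hj2
  have h3 : (0:ℝ) < 2 * (k:ℝ) - 1 := by linarith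
  constructor
  · have : 0 ≤ (2 * (j:ℝ) - 1) * (c - a) / (2 * (k:ℝ) - 1) := by
      apply div_nonneg _ h3.le
      apply mul_nonneg <;> linarith
    linarith
  · have hstep : (2 * (j:ℝ) - 1) * (c - a) / (2 * (k:ℝ) - 1) ≤ c - a := by
      rw [div_le_iff₀ h3]
      nlinarith [sub_nonneg.mpr hac]
    show a + (2 * (j:ℝ) - 1) * (c - a) / (2 * (k:ℝ) - 1) ≤ c
    linarith

lemma rightGrid_subset {d b : ℝ} {m : ℕ} (hdb : d ≤ b) (hm : 1 ≤ m) :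
    rightGrid d b m ⊆ Set.Icc d b := by
  rintro _ ⟨j, ⟨hj1, hj2⟩, rfl⟩
  have h1 : (1:ℝ) ≤ (j:ℝ) := by exact_mod_cast hj1
  have h2 : (j:ℝ) ≤ (m:ℝ) := by exact_mod_cast hj2
  have h3 : (0:ℝ) < 2 * (m:ℝ) - 1 := by linarith
  constructor
  · have : 0 ≤ 2 * ((j:ℝ) - 1) * (b - d) / (2 * (m:ℝ) - 1) := by
      apply div_nonneg _ h3.le
      apply mul_nonneg <;> linarith
    linarith
  · have hstep : 2 * ((j:ℝ) - 1) * (b - d) / (2 * (m:ℝ) - 1) ≤ b - d := by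
      rw [div_le_iff₀ h3]
      nlinarith [sub_nonneg.mpr hdb]
    show d + 2 * ((j:ℝ) - 1) * (b - d) / (2 * (m:ℝ) - 1) ≤ b
    linarith

lemma leftGrid_not_mem {a c : ℝ} {k : ℕ} (hac : a < c) : a ∉ leftGrid a c k := by
  rintro ⟨j, ⟨hj1, hj2⟩, heq⟩
  have h1 : (1:ℝ) ≤ (j:ℝ) := by exact_mod_cast hj1
  have h2 : (j:ℝ) ≤ (k:ℝ) := by exact_mod_cast hj2
  have h3 : (0:ℝ) < 2 * (k:ℝ) - 1 := by linarith
  have : (2 * (j:ℝ) - 1) * (c - a) / (2 * (k:ℝ) - 1) = 0 := by linarith [heq]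
  rw [div_eq_zero_iff] at this
  rcases this with h | h
  · nlinarith
  · linarith

lemma rightGrid_not_mem {d b : ℝ} {m : ℕ} (hdb : d < b) : b ∉ rightGrid d b m := by
  rintro ⟨j, ⟨hj1, hj2⟩, heq⟩
  have h1 : (1:ℝ) ≤ (j:ℝ) := by exact_mod_cast hj1
  have h2 : (j:ℝ) ≤ (m:ℝ) := by exact_mod_cast hj2
  have h3 : (0:ℝ) < 2 * (m:ℝ) - 1 := by linarith
  have heq' : 2 * ((j:ℝ) - 1) * (b - d) / (2 * (m:ℝ) - 1) = b - d := by linarith [heq]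
  rw [div_eq_iff (by linarith)] at heq'
  nlinarith

lemma leftGrid_eq_mid {a c : ℝ} {k : ℕ} (hk : 2 ≤ k) :
    leftGrid a c k = midGrid (a + (c - a) / (2 * (k:ℝ) - 1)) c k := by
  have hkR : (2:ℝ) ≤ k := by exact_mod_cast hk
  have h1 : (k:ℝ) - 1 ≠ 0 := by linarith
  have h2 : 2 * (k:ℝ) - 1 ≠ 0 := by linarith
  unfold leftGrid midGrid
  apply Set.image_congr
  intro j _
  field_simp
  ring

lemma rightGrid_eq_mid {d b : ℝ} {m : ℕ} (hm : 2 ≤ m) :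
    rightGrid d b m = midGrid d (d + (2 * (m:ℝ) - 2) * (b - d) / (2 * (m:ℝ) - 1)) m := by
  have hmR : (2:ℝ) ≤ m := by exact_mod_cast hm
  have h1 : (m:ℝ) - 1 ≠ 0 := by linarith
  have h2 : 2 * (m:ℝ) - 1 ≠ 0 := by linarith
  unfold rightGrid midGrid
  apply Set.image_congr
  intro j _
  field_simp
  ring

lemma dS_pair (u v x : ℝ) : dS {u, v} x = min ((x - u) ^ 2) ((x - v) ^ 2) := by
  have h := dS_insert (Q := ({v} : Set ℝ)) ⟨v, rfl⟩ u x
  rw [dS_singleton] at h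
  exact h

lemma splitB {Q' : Set ℝ} {u q v : ℝ} (hfin : Q'.Finite) (hq : q ∈ Q') (hv : v ∈ Q')
    (hsub : Q' ⊆ Set.Icc q v) (huq : u < q) (hqv : q ≤ v) :
    ∫ x in u..v, dS (insert u Q') x = (q - u) ^ 3 / 12 + ∫ x in q..v, dS Q' x := by
  have hne : Q'.Nonempty := ⟨q, hq⟩
  have hcont : Continuous (dS (insert u Q')) := dS_continuous (hfin.insert u) ⟨u, Set.mem_insert u Q'⟩
  have hcont' : Continuous (dS Q') := dS_continuous hfin hne
  rw [← intervalIntegral.integral_add_adjacent_intervals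
    (hcont.intervalIntegrable (μ := volume) u q) (hcont.intervalIntegrable (μ := volume) q v)]
  have h1 : ∫ x in u..q, dS (insert u Q') x = (q - u) ^ 3 / 12 := by
    have hcongr : ∀ x ∈ Set.uIcc u q, dS (insert u Q') x = min ((x - u) ^ 2) ((x - q) ^ 2) := by
      intro x hx
      rw [Set.uIcc_of_le huq.le] at hx
      rw [dS_insert hne, dS_eq_right (fun p hp => (hsub hp).1) hq hx.2]
    rw [intervalIntegral.integral_congr hcongr, int_cell huq.le]
  have h2 : ∫ x in q..v, dS (insert u Q') x = ∫ x in q..v, dS Q' x := by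
    refine intervalIntegral.integral_congr ?_
    intro x hx
    rw [Set.uIcc_of_le hqv] at hx
    refine le_antisymm (dS_subset (Set.subset_insert u Q') hne x) ?_
    refine dS_mono ⟨u, Set.mem_insert u Q'⟩ ?_
    rintro p (rfl | hp)
    · refine ⟨q, hq, ?_⟩
      have h1 : q ≤ x := hx.1
      nlinarith [huq.le]
    · exact ⟨p, hp, le_rfl⟩
  rw [h1, h2]

lemma splitA {Q : Set ℝ} {u q v : ℝ} (hfin : Q.Finite) (hq : q ∈ Q)
    (hsub : Q ⊆ Set.Icc q v) (huq : u ≤ q) :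
    ∫ x in u..v, dS Q x = (q - u) ^ 3 / 3 + ∫ x in q..v, dS Q x := by
  have hne : Q.Nonempty := ⟨q, hq⟩
  have hcont : Continuous (dS Q) := dS_continuous hfin hne
  have hqv : q ≤ v := (hsub hq).2
  rw [← intervalIntegral.integral_add_adjacent_intervals
    (hcont.intervalIntegrable (μ := volume) u q) (hcont.intervalIntegrable (μ := volume) q v)]
  have h1 : ∫ x in u..q, dS Q x = (q - u) ^ 3 / 3 := by
    have hcongr : ∀ x ∈ Set.uIcc u q, dS Q x = (x - q) ^ 2 := by
      intro x hx
      rw [Set.uIcc_of_le huq] at hx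
      exact dS_eq_right (fun p hp => (hsub hp).1) hq hx.2
    rw [intervalIntegral.integral_congr hcongr, int_sq]
    ring
  rw [h1]

lemma splitA' {Q : Set ℝ} {u r v : ℝ} (hfin : Q.Finite) (hr : r ∈ Q)
    (hsub : Q ⊆ Set.Icc u r) (hrv : r ≤ v) :
    ∫ x in u..v, dS Q x = (∫ x in u..r, dS Q x) + (v - r) ^ 3 / 3 := by
  have hne : Q.Nonempty := ⟨r, hr⟩
  have hcont : Continuous (dS Q) := dS_continuous hfin hne
  have hur : u ≤ r := (hsub hr).1
  rw [← intervalIntegral.integral_add_adjacent_intervals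
    (hcont.intervalIntegrable (μ := volume) u r) (hcont.intervalIntegrable (μ := volume) r v)]
  have h1 : ∫ x in r..v, dS Q x = (v - r) ^ 3 / 3 := by
    have hcongr : ∀ x ∈ Set.uIcc r v, dS Q x = (x - r) ^ 2 := by
      intro x hx
      rw [Set.uIcc_of_le hrv] at hx
      exact dS_eq_left (fun p hp => (hsub hp).2) hr hx.1
    rw [intervalIntegral.integral_congr hcongr, int_sq]
    ring
  rw [h1]

lemma exactB : ∀ (j : ℕ) {u v : ℝ}, u < v →
    ∫ x in u..v, dS (midGrid u v (j + 2)) x = (v - u) ^ 3 / (12 * ((j : ℝ) + 1) ^ 2) := by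
  intro j
  induction j with
  | zero =>
    intro u v huv
    rw [midGrid_two]
    have hcongr : ∀ x ∈ Set.uIcc u v, dS {u, v} x = min ((x - u) ^ 2) ((x - v) ^ 2) :=
      fun x _ => dS_pair u v x
    rw [intervalIntegral.integral_congr hcongr, int_cell huv.le]
    norm_num
  | succ j ih =>
    intro u v huv
    have hl2 : (2:ℝ) ≤ ((j:ℕ):ℝ) + 2 := by push_cast; linarith [Nat.cast_nonneg (α := ℝ) j]
    have hlpos : (0:ℝ) < (j:ℝ) + 2 := by linarith
    set q := u + (v - u) / ((j:ℝ) + 2) with hqdef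
    have hcast : (((j+2 : ℕ)) : ℝ) = (j:ℝ) + 2 := by push_cast; ring
    have hgrid : midGrid u v (j + 1 + 2) = insert u (midGrid q v (j + 2)) := by
      rw [show j + 1 + 2 = (j + 2) + 1 by ring]
      rw [← midGrid_insert (by omega)]
      congr 2
      rw [hcast]
    have huq : u < q := by
      have : 0 < (v - u) / ((j:ℝ) + 2) := div_pos (by linarith) hlpos
      simp [hqdef]; linarith
    have hqv : q < v := by
      have h1 : (v - u) / ((j:ℝ) + 2) < v - u := by
        rw [div_lt_iff₀ hlpos]
        nlinarith
      simp [hqdef]; linarith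
    have hM := midGrid_finite q v (j + 2)
    have hqM : q ∈ midGrid q v (j + 2) := midGrid_left_mem (by omega)
    have hvM : v ∈ midGrid q v (j + 2) := midGrid_right_mem (by omega)
    have hsubM : midGrid q v (j + 2) ⊆ Set.Icc q v := midGrid_subset hqv.le (by omega)
    rw [hgrid, splitB hM hqM hvM hsubM huq hqv.le, ih hqv]
    have h1 : q - u = (v - u) / ((j:ℝ) + 2) := by simp [hqdef]
    have h2 : v - q = ((j:ℝ) + 1) * (v - u) / ((j:ℝ) + 2) := by
      rw [hqdef]; field_simp; ring
    rw [h1, h2]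
    have h3 : ((j:ℝ)) + 1 ≠ 0 := by positivity
    have h4 : ((j:ℝ)) + 2 ≠ 0 := by positivity
    push_cast
    field_simp
    ring

lemma lowerB : ∀ (j : ℕ) (Q : Set ℝ) (u v : ℝ), u < v → Q.Finite → Q ⊆ Set.Icc u v →
    u ∈ Q → v ∈ Q → Q.ncard = j + 2 →
    (v - u) ^ 3 / (12 * ((j : ℝ) + 1) ^ 2) ≤ (∫ x in u..v, dS Q x) ∧
    ((∫ x in u..v, dS Q x) = (v - u) ^ 3 / (12 * ((j : ℝ) + 1) ^ 2) → Q = midGrid u v (j + 2)) := by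
  intro j
  induction j with
  | zero =>
    intro Q u v huv hfin hsub hu hv hcard
    have hQ : Q = {u, v} := by
      refine (Set.eq_of_subset_of_ncard_le ?_ ?_ hfin).symm
      · exact Set.insert_subset hu (Set.singleton_subset_iff.mpr hv)
      · rw [hcard, Set.ncard_pair huv.ne]
    subst hQ
    have hval : ∫ x in u..v, dS {u, v} x = (v - u) ^ 3 / 12 := by
      have hcongr : ∀ x ∈ Set.uIcc u v, dS {u, v} x = min ((x - u) ^ 2) ((x - v) ^ 2) :=
        fun x _ => dS_pair u v x
      rw [intervalIntegral.integral_congr hcongr, int_cell huv.le]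
    rw [hval]
    exact ⟨le_of_eq (by norm_num), fun _ => midGrid_two.symm⟩
  | succ j ih =>
    intro Q u v huv hfin hsub hu hv hcard
    set Q' := Q \ {u} with hQ'def
    have hfin' : Q'.Finite := hfin.diff
    have hcard' : Q'.ncard = j + 2 := by
      rw [hQ'def, Set.ncard_diff_singleton_of_mem hu, hcard]
      omega
    have hv' : v ∈ Q' := ⟨hv, fun h => huv.ne (Set.mem_singleton_iff.mp h).symm⟩
    have hne' : Q'.Nonempty := ⟨v, hv'⟩
    set q := sInf Q' with hqdef
    have hqm : q ∈ Q' := hne'.csInf_mem hfin'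
    have hqlb : ∀ p ∈ Q', q ≤ p := fun p hp => csInf_le hfin'.bddBelow hp
    have hsub' : Q' ⊆ Set.Icc q v := fun p hp => ⟨hqlb p hp, (hsub hp.1).2⟩
    have huq : u < q := by
      rcases lt_or_eq_of_le (hsub hqm.1).1 with h | h
      · exact h
      · exact absurd h.symm (fun h' => hqm.2 (Set.mem_singleton_iff.mpr h'))
    have hqv : q < v := by
      rcases lt_or_eq_of_le (hsub' hqm).2 with h | h
      · exact h
      · exfalso
        have hQ'sub : Q' ⊆ {v} := fun p hp => by
          have h1 := hqlb p hp
          have h2 := (hsub' hp).2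
          simp only [Set.mem_singleton_iff]
          linarith [h ▸ h1]
        have := Set.ncard_le_ncard hQ'sub (Set.finite_singleton v)
        rw [hcard', Set.ncard_singleton] at this
        omega
    have hQeq : Q = insert u Q' := by
      rw [hQ'def, Set.insert_diff_singleton, Set.insert_eq_self.mpr hu]
    have hIH := ih Q' q v hqv hfin' hsub' hqm hv' hcard'
    have hsplit : ∫ x in u..v, dS Q x = (q - u) ^ 3 / 12 + ∫ x in q..v, dS Q' x := by
      rw [hQeq]
      exact splitB hfin' hqm hv' hsub' huq hqv.le
    have htan := tangentB (t := q - u) (s := v - q) (L := v - u) (j := (j:ℝ) + 1)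
      (by linarith [Nat.cast_nonneg (α := ℝ) j]) (by linarith) (by linarith) (by ring)
    have hcast1 : ((j + 1 : ℕ) : ℝ) + 1 = ((j:ℝ) + 1) + 1 := by push_cast; ring
    constructor
    · rw [hsplit, hcast1]
      linarith [htan.1, hIH.1]
    · intro heq
      rw [hsplit, hcast1] at heq
      have hIHeq : ∫ x in q..v, dS Q' x = (v - q) ^ 3 / (12 * ((j:ℝ) + 1) ^ 2) := by
        linarith [htan.1, hIH.1, heq.le, heq.ge]
      have htaneq : q - u = (v - u) / (((j:ℝ) + 1) + 1) := by
        apply htan.2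
        linarith [heq]
      have hQ'grid := hIH.2 hIHeq
      have hqval : q = u + (v - u) / (((j + 2 : ℕ)) : ℝ) := by
        rw [show (((j + 2 : ℕ)) : ℝ) = ((j:ℝ) + 1) + 1 by push_cast; ring]
        linarith [htaneq]
      rw [hQeq, hQ'grid, hqval, midGrid_insert (by omega),
        show j + 2 + 1 = j + 1 + 2 from by omega]

lemma exactA {u v : ℝ} (k : ℕ) (hk : 1 ≤ k) (huv : u < v) :
    ∫ x in u..v, dS (leftGrid u v k) x = (v - u) ^ 3 / (3 * (2 * (k:ℝ) - 1) ^ 2) := by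
  match k, hk with
  | 1, _ =>
    rw [leftGrid_one]
    have hcongr : ∀ x ∈ Set.uIcc u v, dS {v} x = (x - v) ^ 2 := fun x _ => dS_singleton v x
    rw [intervalIntegral.integral_congr hcongr, int_sq]
    norm_num
    ring
  | (k' + 2), _ =>
    have hr0 : (0:ℝ) ≤ (k':ℝ) := Nat.cast_nonneg k'
    have hden : (0:ℝ) < 2 * ((k' + 2 : ℕ):ℝ) - 1 := by push_cast; linarith
    set q := u + (v - u) / (2 * ((k' + 2 : ℕ):ℝ) - 1) with hqdef
    have huq : u < q := by
      have : 0 < (v - u) / (2 * ((k' + 2 : ℕ):ℝ) - 1) := div_pos (by linarith) hden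
      rw [hqdef]; linarith
    have hqv : q < v := by
      have : (v - u) / (2 * ((k' + 2 : ℕ):ℝ) - 1) < v - u := by
        rw [div_lt_iff₀ hden]; push_cast; nlinarith
      rw [hqdef]; linarith
    have h3 : (k':ℝ) + 1 ≠ 0 := by linarith
    have h4 : 2 * ((k':ℝ) + 2) - 1 ≠ 0 := by linarith
    rw [leftGrid_eq_mid (by omega), ← hqdef]
    have hM := midGrid_finite q v (k' + 2)
    have hqM : q ∈ midGrid q v (k' + 2) := midGrid_left_mem (by omega)
    have hsubM : midGrid q v (k' + 2) ⊆ Set.Icc q v := midGrid_subset hqv.le (by omega)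
    rw [splitA hM hqM hsubM huq.le, exactB k' hqv]
    have h1 : q - u = (v - u) / (2 * ((k':ℝ) + 2) - 1) := by rw [hqdef]; push_cast; ring_nf
    have h2 : v - q = (2 * ((k':ℝ) + 2) - 2) * (v - u) / (2 * ((k':ℝ) + 2) - 1) := by
      rw [hqdef]; push_cast; field_simp; ring
    rw [h1, h2]
    push_cast
    field_simp
    ring

lemma exactA' {u v : ℝ} (m : ℕ) (hm : 1 ≤ m) (huv : u < v) :
    ∫ x in u..v, dS (rightGrid u v m) x = (v - u) ^ 3 / (3 * (2 * (m:ℝ) - 1) ^ 2) := by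
  match m, hm with
  | 1, _ =>
    rw [rightGrid_one]
    have hcongr : ∀ x ∈ Set.uIcc u v, dS {u} x = (x - u) ^ 2 := fun x _ => dS_singleton u x
    rw [intervalIntegral.integral_congr hcongr, int_sq]
    norm_num
  | (m' + 2), _ =>
    have hr0 : (0:ℝ) ≤ (m':ℝ) := Nat.cast_nonneg m'
    have hden : (0:ℝ) < 2 * ((m' + 2 : ℕ):ℝ) - 1 := by push_cast; linarith
    set r := u + (2 * ((m' + 2 : ℕ):ℝ) - 2) * (v - u) / (2 * ((m' + 2 : ℕ):ℝ) - 1) with hrdef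
    have hur : u < r := by
      have : 0 < (2 * ((m' + 2 : ℕ):ℝ) - 2) * (v - u) / (2 * ((m' + 2 : ℕ):ℝ) - 1) := by
        apply div_pos _ hden
        push_cast
        nlinarith
      rw [hrdef]; linarith
    have hrv : r < v := by
      have : (2 * ((m' + 2 : ℕ):ℝ) - 2) * (v - u) / (2 * ((m' + 2 : ℕ):ℝ) - 1) < v - u := by
        rw [div_lt_iff₀ hden]; push_cast; nlinarith
      rw [hrdef]; linarith
    have h3 : (m':ℝ) + 1 ≠ 0 := by linarith
    have h4 : 2 * ((m':ℝ) + 2) - 1 ≠ 0 := by linarith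
    rw [rightGrid_eq_mid (by omega), ← hrdef]
    have hM := midGrid_finite u r (m' + 2)
    have hrM : r ∈ midGrid u r (m' + 2) := midGrid_right_mem (by omega)
    have hsubM : midGrid u r (m' + 2) ⊆ Set.Icc u r := midGrid_subset hur.le (by omega)
    rw [splitA' hM hrM hsubM hrv.le, exactB m' hur]
    have h1 : v - r = (v - u) / (2 * ((m':ℝ) + 2) - 1) := by
      rw [hrdef]; push_cast; field_simp; ring
    have h2 : r - u = (2 * ((m':ℝ) + 2) - 2) * (v - u) / (2 * ((m':ℝ) + 2) - 1) := by
      rw [hrdef]; push_cast; ring_nf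
    rw [h1, h2]
    push_cast
    field_simp
    ring

lemma lowerA {u v : ℝ} (k : ℕ) (hk : 1 ≤ k) (huv : u < v) (Q : Set ℝ) (hfin : Q.Finite)
    (hsub : Q ⊆ Set.Icc u v) (hv : v ∈ Q) (hcard : Q.ncard = k) :
    (v - u) ^ 3 / (3 * (2 * (k:ℝ) - 1) ^ 2) ≤ (∫ x in u..v, dS Q x) ∧
    ((∫ x in u..v, dS Q x) = (v - u) ^ 3 / (3 * (2 * (k:ℝ) - 1) ^ 2) → Q = leftGrid u v k) := by
  match k, hk with
  | 1, _ =>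
    have hQ : Q = {v} := by
      obtain ⟨a, ha⟩ := Set.ncard_eq_one.mp hcard
      rw [ha] at hv ⊢
      rw [Set.mem_singleton_iff.mp hv]
    subst hQ
    have hcongr : ∀ x ∈ Set.uIcc u v, dS {v} x = (x - v) ^ 2 := fun x _ => dS_singleton v x
    rw [intervalIntegral.integral_congr hcongr, int_sq]
    constructor
    · apply le_of_eq
      norm_num
      ring
    · intro _
      exact leftGrid_one.symm
  | (k' + 2), _ =>
    have hQne : Q.Nonempty := ⟨v, hv⟩
    set q := sInf Q with hqdef
    have hqm : q ∈ Q := hQne.csInf_mem hfin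
    have hqlb : ∀ p ∈ Q, q ≤ p := fun p hp => csInf_le hfin.bddBelow hp
    have hsub' : Q ⊆ Set.Icc q v := fun p hp => ⟨hqlb p hp, (hsub hp).2⟩
    have huq : u ≤ q := (hsub hqm).1
    have hqv : q < v := by
      rcases lt_or_eq_of_le (hsub' hqm).2 with h | h
      · exact h
      · exfalso
        have hQsub : Q ⊆ {v} := fun p hp => by
          have h1 := hqlb p hp
          have h2 := (hsub' hp).2
          simp only [Set.mem_singleton_iff]
          linarith [h ▸ h1]
        have := Set.ncard_le_ncard hQsub (Set.finite_singleton v)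
        rw [hcard, Set.ncard_singleton] at this
        omega
    have hsplit := splitA hfin hqm hsub' huq
    have hIH := lowerB k' Q q v hqv hfin hsub' hqm hv hcard
    have htan := tangentA (t := q - u) (s := v - q) (L := v - u) (j := (k':ℝ) + 1)
      (by linarith [Nat.cast_nonneg (α := ℝ) k']) (by linarith) (by linarith) (by ring)
    have hcast : 2 * (((k' + 2 : ℕ)):ℝ) - 1 = 2 * ((k':ℝ) + 1) + 1 := by push_cast; ring
    constructor
    · rw [hsplit, hcast]
      linarith [htan.1, hIH.1]
    · intro heq
      rw [hsplit, hcast] at heq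
      have hIHeq : ∫ x in q..v, dS Q x = (v - q) ^ 3 / (12 * ((k':ℝ) + 1) ^ 2) := by
        linarith [htan.1, hIH.1, heq.le]
      have hQgrid := hIH.2 hIHeq
      have htaneq : q - u = (v - u) / (2 * ((k':ℝ) + 1) + 1) := htan.2 (by linarith [heq])
      rw [show 2 * ((k':ℝ) + 1) + 1 = 2 * (((k' + 2:ℕ)):ℝ) - 1 by push_cast; ring] at htaneq
      have hqval : q = u + (v - u) / (2 * (((k' + 2:ℕ)):ℝ) - 1) := by linarith
      rw [hQgrid, leftGrid_eq_mid (by omega), ← hqval]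

lemma lowerA' {u v : ℝ} (m : ℕ) (hm : 1 ≤ m) (huv : u < v) (Q : Set ℝ) (hfin : Q.Finite)
    (hsub : Q ⊆ Set.Icc u v) (hu : u ∈ Q) (hcard : Q.ncard = m) :
    (v - u) ^ 3 / (3 * (2 * (m:ℝ) - 1) ^ 2) ≤ (∫ x in u..v, dS Q x) ∧
    ((∫ x in u..v, dS Q x) = (v - u) ^ 3 / (3 * (2 * (m:ℝ) - 1) ^ 2) → Q = rightGrid u v m) := by
  match m, hm with
  | 1, _ =>
    have hQ : Q = {u} := by
      obtain ⟨a, ha⟩ := Set.ncard_eq_one.mp hcard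
      rw [ha] at hu ⊢
      rw [Set.mem_singleton_iff.mp hu]
    subst hQ
    have hcongr : ∀ x ∈ Set.uIcc u v, dS {u} x = (x - u) ^ 2 := fun x _ => dS_singleton u x
    rw [intervalIntegral.integral_congr hcongr, int_sq]
    constructor
    · apply le_of_eq
      norm_num
    · intro _
      exact rightGrid_one.symm
  | (m' + 2), _ =>
    have hQne : Q.Nonempty := ⟨u, hu⟩
    set r := sSup Q with hrdef
    have hrm : r ∈ Q := hQne.csSup_mem hfin
    have hub : ∀ p ∈ Q, p ≤ r := fun p hp => le_csSup hfin.bddAbove hp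
    have hsub' : Q ⊆ Set.Icc u r := fun p hp => ⟨(hsub hp).1, hub p hp⟩
    have hrv : r ≤ v := (hsub hrm).2
    have hur : u < r := by
      rcases lt_or_eq_of_le (hsub' hrm).1 with h | h
      · exact h
      · exfalso
        have hQsub : Q ⊆ {u} := fun p hp => by
          have h1 := hub p hp
          have h2 := (hsub' hp).1
          simp only [Set.mem_singleton_iff]
          linarith [h ▸ h1]
        have := Set.ncard_le_ncard hQsub (Set.finite_singleton u)
        rw [hcard, Set.ncard_singleton] at this
        omega
    have hsplit := splitA' hfin hrm hsub' hrv
    have hIH := lowerB m' Q u r hur hfin hsub' hu hrm hcard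
    have htan := tangentA (t := v - r) (s := r - u) (L := v - u) (j := (m':ℝ) + 1)
      (by linarith [Nat.cast_nonneg (α := ℝ) m']) (by linarith) (by linarith) (by ring)
    have hcast : 2 * (((m' + 2 : ℕ)):ℝ) - 1 = 2 * ((m':ℝ) + 1) + 1 := by push_cast; ring
    constructor
    · rw [hsplit, hcast]
      linarith [htan.1, hIH.1]
    · intro heq
      rw [hsplit, hcast] at heq
      have hIHeq : ∫ x in u..r, dS Q x = (r - u) ^ 3 / (12 * ((m':ℝ) + 1) ^ 2) := by
        linarith [htan.1, hIH.1, heq.le]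
      have hQgrid := hIH.2 hIHeq
      have htaneq : v - r = (v - u) / (2 * ((m':ℝ) + 1) + 1) := htan.2 (by linarith [heq])
      have hD : (2 * ((m':ℝ) + 1) + 1) ≠ 0 := by
        have : (0:ℝ) ≤ (m':ℝ) := Nat.cast_nonneg m'
        linarith
      have hlin : (v - r) * (2 * ((m':ℝ) + 1) + 1) = v - u := by
        rw [htaneq, div_mul_cancel₀ _ hD]
      have hrval : r = u + (2 * (((m' + 2:ℕ)):ℝ) - 2) * (v - u) / (2 * (((m' + 2:ℕ)):ℝ) - 1) := by
        have hD2 : (2 * ((m':ℝ) + 2) - 1) ≠ 0 := by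
          have : (0:ℝ) ≤ (m':ℝ) := Nat.cast_nonneg m'
          linarith
        push_cast
        field_simp
        linear_combination (-1 : ℝ) * hlin
      rw [hQgrid, rightGrid_eq_mid (by omega), ← hrval]


lemma distortion_eq_dS (P : Measure ℝ) (S : Set ℝ) : distortion P S = ∫ x, dS S x ∂P := rfl

lemma distortion_eq {a b : ℝ} (hab : a < b) (S : Set ℝ) :
    distortion (uniformOn a b) S = (b - a)⁻¹ * ∫ x in a..b, dS S x := by
  rw [distortion_eq_dS]
  unfold uniformOn
  rw [integral_smul_measure, ENNReal.toReal_inv, ENNReal.toReal_ofReal (by linarith : 0 ≤ b - a),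
    smul_eq_mul]
  congr 1
  rw [intervalIntegral.integral_of_le hab.le]
  exact MeasureTheory.integral_Icc_eq_integral_Ioc

lemma distortion_nonneg (P : Measure ℝ) (S : Set ℝ) : 0 ≤ distortion P S := by
  rw [distortion_eq_dS]
  exact integral_nonneg (fun x => dS_nonneg S x)

lemma condSet_bddBelow (P : Measure ℝ) (β : Set ℝ) (n : ℕ) :
    BddBelow { v : ℝ | ∃ α : Set ℝ, α.Finite ∧ α.ncard ≤ n - β.ncard ∧ v = distortion P (α ∪ β) } := by
  refine ⟨0, ?_⟩
  rintro v ⟨α, -, -, rfl⟩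
  exact distortion_nonneg P _

lemma compet {a b c d : ℝ} (hac : a < c) (hcd : c < d) (hdb : d < b) {n : ℕ}
    (K L M : ℕ) (hK : 1 ≤ K) (hL : 2 ≤ L) (hM : 1 ≤ M) (hsum : K + L + M ≤ n + 2) :
    condQuantError (uniformOn a b) {c, d} n ≤
      (b - a)⁻¹ * ((c - a) ^ 3 / (3 * (2 * (K:ℝ) - 1) ^ 2)
        + (d - c) ^ 3 / (12 * ((L:ℝ) - 1) ^ 2) + (b - d) ^ 3 / (3 * (2 * (M:ℝ) - 1) ^ 2)) := by
  have hab : a < b := hac.trans (hcd.trans hdb)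
  classical
  set lG := leftGrid a c K with hlG
  set mG := midGrid c d L with hmG
  set rG := rightGrid d b M with hrG
  have hlGfin := leftGrid_finite a c K
  have hmGfin := midGrid_finite c d L
  have hrGfin := rightGrid_finite d b M
  have hclG : c ∈ lG := leftGrid_right_mem hK
  have hcmG : c ∈ mG := midGrid_left_mem (by omega)
  have hdmG : d ∈ mG := midGrid_right_mem hL
  have hdrG : d ∈ rG := rightGrid_left_mem hM
  have hlGsub : lG ⊆ Set.Icc a c := leftGrid_subset hac.le hK
  have hmGsub : mG ⊆ Set.Icc c d := midGrid_subset hcd.le hL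
  have hrGsub : rG ⊆ Set.Icc d b := rightGrid_subset hdb.le hM
  set G := lG ∪ (mG ∪ rG) with hG
  have hGfin : G.Finite := hlGfin.union (hmGfin.union hrGfin)
  have hGne : G.Nonempty := ⟨c, Or.inl hclG⟩
  have hcG : c ∈ G := Or.inl hclG
  have hdG : d ∈ G := Or.inr (Or.inl hdmG)
  -- cardinality of G \ {c, d}
  have hcard : (G \ {c, d}).ncard ≤ n - 2 := by
    have hsubdiff : G \ {c, d} ⊆ (lG \ {c}) ∪ ((mG \ {c, d}) ∪ (rG \ {d})) := by
      rintro x ⟨hx, hxcd⟩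
      have hxc : x ≠ c := fun h => hxcd (by rw [h]; exact Or.inl rfl)
      have hxd : x ≠ d := fun h => hxcd (by rw [h]; exact Or.inr rfl)
      rcases hx with h | h | h
      · exact Or.inl ⟨h, by simpa using hxc⟩
      · exact Or.inr (Or.inl ⟨h, hxcd⟩)
      · exact Or.inr (Or.inr ⟨h, by simpa using hxd⟩)
    have h1 : (lG \ {c}).ncard ≤ K - 1 := by
      have e1 : (lG \ {c}).ncard = lG.ncard - 1 := Set.ncard_diff_singleton_of_mem hclG
      have e2 : lG.ncard ≤ K := by
        calc lG.ncard ≤ (Set.Icc 1 K).ncard := Set.ncard_image_le (Set.finite_Icc 1 K)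
        _ = K := ncard_Icc_one K
      omega
    have h2 : (mG \ {c, d}).ncard ≤ L - 2 := by
      have e0 : mG.ncard = L := midGrid_ncard hcd hL
      have estep : mG \ {c, d} = (mG \ {c}) \ {d} := by
        rw [show ({c, d} : Set ℝ) = {c} ∪ {d} from rfl, ← Set.diff_diff]
      have e1 : (mG \ {c}).ncard = L - 1 := by
        rw [Set.ncard_diff_singleton_of_mem hcmG, e0]
      have hd' : d ∈ mG \ {c} := ⟨hdmG, by simpa using hcd.ne'⟩
      have e2 : ((mG \ {c}) \ {d}).ncard = L - 1 - 1 :=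
        by rw [Set.ncard_diff_singleton_of_mem hd', e1]
      rw [estep, e2]
      omega
    have h3 : (rG \ {d}).ncard ≤ M - 1 := by
      have e1 : (rG \ {d}).ncard = rG.ncard - 1 := Set.ncard_diff_singleton_of_mem hdrG
      have e2 : rG.ncard ≤ M := by
        calc rG.ncard ≤ (Set.Icc 1 M).ncard := Set.ncard_image_le (Set.finite_Icc 1 M)
        _ = M := ncard_Icc_one M
      omega
    calc (G \ {c, d}).ncard
        ≤ ((lG \ {c}) ∪ ((mG \ {c, d}) ∪ (rG \ {d}))).ncard :=
          Set.ncard_le_ncard hsubdiff (((hlGfin.diff).union ((hmGfin.diff).union (hrGfin.diff))))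
      _ ≤ (lG \ {c}).ncard + ((mG \ {c, d}) ∪ (rG \ {d})).ncard := Set.ncard_union_le _ _
      _ ≤ (lG \ {c}).ncard + ((mG \ {c, d}).ncard + (rG \ {d}).ncard) := by
          linarith [Set.ncard_union_le (mG \ {c, d}) (rG \ {d})]
      _ ≤ (K - 1) + ((L - 2) + (M - 1)) := by omega
      _ ≤ n - 2 := by omega
  -- G is a member configuration
  have hmem : distortion (uniformOn a b) G ∈
      { v : ℝ | ∃ α : Set ℝ, α.Finite ∧ α.ncard ≤ n - ({c, d} : Set ℝ).ncard ∧
        v = distortion (uniformOn a b) (α ∪ {c, d}) } := by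
    refine ⟨G \ {c, d}, hGfin.diff, ?_, ?_⟩
    · rw [Set.ncard_pair hcd.ne]
      exact hcard
    · rw [Set.diff_union_of_subset (by
        rintro x (rfl | rfl)
        · exact hcG
        · exact hdG)]
  have hle : condQuantError (uniformOn a b) {c, d} n ≤ distortion (uniformOn a b) G :=
    csInf_le (condSet_bddBelow _ _ _) hmem
  -- compute distortion of G
  have hcongr1 : ∀ x ∈ Set.uIcc a c, dS G x = dS lG x := by
    intro x hx
    rw [Set.uIcc_of_le hac.le] at hx
    refine le_antisymm (dS_subset Set.subset_union_left ⟨c, hclG⟩ x) (dS_mono hGne ?_)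
    rintro p (hp | hp)
    · exact ⟨p, hp, le_rfl⟩
    · refine ⟨c, hclG, ?_⟩
      have hpc : c ≤ p := by
        rcases hp with hp | hp
        · exact (hmGsub hp).1
        · exact hcd.le.trans (hrGsub hp).1
      have := hx.2
      nlinarith
  have hcongr2 : ∀ x ∈ Set.uIcc c d, dS G x = dS mG x := by
    intro x hx
    rw [Set.uIcc_of_le hcd.le] at hx
    refine le_antisymm (dS_subset (fun p hp => Or.inr (Or.inl hp)) ⟨c, hcmG⟩ x)
      (dS_mono hGne ?_)
    rintro p (hp | hp | hp)
    · refine ⟨c, hcmG, ?_⟩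
      have hpc : p ≤ c := (hlGsub hp).2
      have := hx.1
      nlinarith
    · exact ⟨p, hp, le_rfl⟩
    · refine ⟨d, hdmG, ?_⟩
      have hpd : d ≤ p := (hrGsub hp).1
      have := hx.2
      nlinarith
  have hcongr3 : ∀ x ∈ Set.uIcc d b, dS G x = dS rG x := by
    intro x hx
    rw [Set.uIcc_of_le hdb.le] at hx
    refine le_antisymm (dS_subset (fun p hp => Or.inr (Or.inr hp)) ⟨d, hdrG⟩ x)
      (dS_mono hGne ?_)
    rintro p (hp | hp | hp)
    · refine ⟨d, hdrG, ?_⟩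
      have hpc : p ≤ c := (hlGsub hp).2
      have := hx.1
      nlinarith [hcd.le]
    · refine ⟨d, hdrG, ?_⟩
      have hpd : p ≤ d := (hmGsub hp).2
      have := hx.1
      nlinarith
    · exact ⟨p, hp, le_rfl⟩
  have hGcont : Continuous (dS G) := dS_continuous hGfin hGne
  have hsplit : ∫ x in a..b, dS G x
      = (∫ x in a..c, dS G x) + (∫ x in c..d, dS G x) + (∫ x in d..b, dS G x) := by
    rw [intervalIntegral.integral_add_adjacent_intervals
      (hGcont.intervalIntegrable (μ := volume) a c) (hGcont.intervalIntegrable (μ := volume) c d),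
      intervalIntegral.integral_add_adjacent_intervals
      (hGcont.intervalIntegrable (μ := volume) a d) (hGcont.intervalIntegrable (μ := volume) d b)]
  obtain ⟨L2, rfl⟩ : ∃ L2, L = L2 + 2 := ⟨L - 2, by omega⟩
  have hcastL : ((L2 + 2 : ℕ) : ℝ) - 1 = (L2 : ℝ) + 1 := by push_cast; ring
  have hval : distortion (uniformOn a b) G
      = (b - a)⁻¹ * ((c - a) ^ 3 / (3 * (2 * (K:ℝ) - 1) ^ 2)
        + (d - c) ^ 3 / (12 * (((L2 + 2 : ℕ):ℝ) - 1) ^ 2)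
        + (b - d) ^ 3 / (3 * (2 * (M:ℝ) - 1) ^ 2)) := by
    rw [distortion_eq hab, hsplit,
      intervalIntegral.integral_congr hcongr1,
      intervalIntegral.integral_congr hcongr2,
      intervalIntegral.integral_congr hcongr3,
      exactA K hK hac, exactB L2 hcd, exactA' M hM hdb, hcastL]
  rw [hval] at hle
  exact hle

lemma final_alg (A B C x y z w : ℝ) (hx : x ≠ 0) (hy : y ≠ 0) (hz : z ≠ 0) (hw : w ≠ 0) :
    w⁻¹ * (A / (3 * x ^ 2) + B / (12 * y ^ 2) + C / (3 * z ^ 2))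
      = 1 / (3 * w) * (A / x ^ 2 + 1 / 4 * B / y ^ 2 + C / z ^ 2) := by
  field_simp
  ring

set_option maxHeartbeats 1000000 in
/-- Proposition 2.1: structure of conditional optimal sets of `n`-points for the uniform
distribution on `[a, b]` with respect to the conditional set `{c, d}`. -/
theorem stmt0 (a b c d : ℝ) (hac : a < c) (hcd : c < d) (hdb : d < b)
    (n k l m : ℕ) (hn : 2 ≤ n) (hk : 1 ≤ k) (hm : 1 ≤ m) (hl : 2 ≤ l)
    (α : Set ℝ) (hαf : α.Finite) (hαcard : α.ncard ≤ n - 2)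
    (hopt : distortion (uniformOn a b) (α ∪ {c, d}) = condQuantError (uniformOn a b) {c, d} n)
    (hkc : ((α ∪ {c, d}) ∩ Set.Icc a c).ncard = k)
    (hlc : ((α ∪ {c, d}) ∩ Set.Icc c d).ncard = l)
    (hmc : ((α ∪ {c, d}) ∩ Set.Icc d b).ncard = m) :
    k + l + m = n + 2
    ∧ (α ∪ {c, d}) ∩ Set.Icc a c
        = (fun j : ℕ => a + (2 * (j : ℝ) - 1) * (c - a) / (2 * (k : ℝ) - 1)) '' Set.Icc 1 k
    ∧ (α ∪ {c, d}) ∩ Set.Icc c d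
        = (fun j : ℕ => c + (((j : ℝ) - 1) / ((l : ℝ) - 1)) * (d - c)) '' Set.Icc 1 l
    ∧ (α ∪ {c, d}) ∩ Set.Icc d b
        = (fun j : ℕ => d + 2 * ((j : ℝ) - 1) * (b - d) / (2 * (m : ℝ) - 1)) '' Set.Icc 1 m
    ∧ condQuantError (uniformOn a b) {c, d} n
        = 1 / (3 * (b - a)) * ((c - a) ^ 3 / (2 * (k : ℝ) - 1) ^ 2
            + 1 / 4 * (d - c) ^ 3 / ((l : ℝ) - 1) ^ 2
            + (b - d) ^ 3 / (2 * (m : ℝ) - 1) ^ 2) := by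
  classical
  obtain ⟨l2, rfl⟩ : ∃ l2, l = l2 + 2 := ⟨l - 2, by omega⟩
  have hab : a < b := hac.trans (hcd.trans hdb)
  have hba : (0:ℝ) < b - a := by linarith
  set F := α ∪ ({c, d} : Set ℝ) with hFdef
  have hcF : c ∈ F := Or.inr (Or.inl rfl)
  have hdF : d ∈ F := Or.inr (Or.inr rfl)
  have hFfin : F.Finite := hαf.union ((Set.finite_singleton d).insert c)
  have hFne : F.Nonempty := ⟨c, hcF⟩
  have hFcard : F.ncard ≤ n := by
    have h1 := Set.ncard_union_le α ({c, d} : Set ℝ)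
    rw [Set.ncard_pair hcd.ne, ← hFdef] at h1
    omega
  set S1 := F ∩ Set.Iic c with hS1
  set S3 := F ∩ Set.Ici d with hS3
  set Q1 := (fun p => max p a) '' S1 with hQ1
  set Q2 := F ∩ Set.Icc c d with hQ2
  set Q3 := (fun p => min p b) '' S3 with hQ3
  have hS1fin : S1.Finite := hFfin.inter_of_left _
  have hS3fin : S3.Finite := hFfin.inter_of_left _
  have hQ1fin : Q1.Finite := hS1fin.image _
  have hQ2fin : Q2.Finite := hFfin.inter_of_left _
  have hQ3fin : Q3.Finite := hS3fin.image _
  have hcQ1 : c ∈ Q1 := ⟨c, ⟨hcF, Set.mem_Iic.mpr le_rfl⟩, max_eq_left hac.le⟩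
  have hcQ2 : c ∈ Q2 := ⟨hcF, Set.mem_Icc.mpr ⟨le_rfl, hcd.le⟩⟩
  have hdQ2 : d ∈ Q2 := ⟨hdF, Set.mem_Icc.mpr ⟨hcd.le, le_rfl⟩⟩
  have hdQ3 : d ∈ Q3 := ⟨d, ⟨hdF, Set.mem_Ici.mpr le_rfl⟩, min_eq_left hdb.le⟩
  have hQ1sub : Q1 ⊆ Set.Icc a c := by
    rintro _ ⟨p, ⟨-, hpc⟩, rfl⟩
    exact ⟨le_max_right p a, max_le hpc hac.le⟩
  have hQ2sub : Q2 ⊆ Set.Icc c d := Set.inter_subset_right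
  have hQ3sub : Q3 ⊆ Set.Icc d b := by
    rintro _ ⟨p, ⟨-, hpd⟩, rfl⟩
    exact ⟨le_min hpd hdb.le, min_le_right p b⟩
  set k1 := Q1.ncard with hk1
  set m1 := Q3.ncard with hm1
  have hk1pos : 1 ≤ k1 := (Set.ncard_pos hQ1fin).mpr ⟨c, hcQ1⟩
  have hm1pos : 1 ≤ m1 := (Set.ncard_pos hQ3fin).mpr ⟨d, hdQ3⟩
  -- counting
  have hIiofin : (F ∩ Set.Iio c).Finite := hFfin.inter_of_left _
  have hIoifin : (F ∩ Set.Ioi d).Finite := hFfin.inter_of_left _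
  have hdecomp : F.ncard = (F ∩ Set.Iio c).ncard + Q2.ncard + (F ∩ Set.Ioi d).ncard := by
    have hFeq : F = (F ∩ Set.Iio c) ∪ (Q2 ∪ (F ∩ Set.Ioi d)) := by
      ext p
      constructor
      · intro hp
        rcases lt_trichotomy p c with h | h | h
        · exact Or.inl ⟨hp, h⟩
        · subst h
          exact Or.inr (Or.inl ⟨hp, le_rfl, hcd.le⟩)
        · rcases le_or_gt p d with h2 | h2
          · exact Or.inr (Or.inl ⟨hp, h.le, h2⟩)
          · exact Or.inr (Or.inr ⟨hp, h2⟩)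
      · rintro (⟨h, -⟩ | ⟨h, -⟩ | ⟨h, -⟩) <;> exact h
    have hdisj1 : Disjoint (F ∩ Set.Iio c) (Q2 ∪ (F ∩ Set.Ioi d)) := by
      rw [Set.disjoint_left]
      rintro p ⟨-, hplt⟩ (⟨-, hpc, -⟩ | ⟨-, hpgt⟩)
      · exact absurd hplt (not_lt.mpr hpc)
      · simp only [Set.mem_Iio, Set.mem_Ioi] at *
        linarith
    have hdisj2 : Disjoint Q2 (F ∩ Set.Ioi d) := by
      rw [Set.disjoint_left]
      rintro p ⟨-, -, hpd⟩ ⟨-, hpgt⟩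
      simp only [Set.mem_Ioi] at hpgt
      linarith
    calc F.ncard = ((F ∩ Set.Iio c) ∪ (Q2 ∪ (F ∩ Set.Ioi d))).ncard := by rw [← hFeq]
      _ = (F ∩ Set.Iio c).ncard + (Q2 ∪ (F ∩ Set.Ioi d)).ncard :=
          Set.ncard_union_eq hdisj1 hIiofin (hQ2fin.union hIoifin)
      _ = (F ∩ Set.Iio c).ncard + (Q2.ncard + (F ∩ Set.Ioi d).ncard) := by
          rw [Set.ncard_union_eq hdisj2 hQ2fin hIoifin]
      _ = (F ∩ Set.Iio c).ncard + Q2.ncard + (F ∩ Set.Ioi d).ncard := by omega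
  have hS1card : S1.ncard = (F ∩ Set.Iio c).ncard + 1 := by
    have hins : S1 = insert c (F ∩ Set.Iio c) := by
      ext p
      constructor
      · rintro ⟨hpF, hpc⟩
        rcases eq_or_lt_of_le (Set.mem_Iic.mp hpc) with h | h
        · exact Or.inl h
        · exact Or.inr ⟨hpF, Set.mem_Iio.mpr h⟩
      · rintro (rfl | ⟨h1, h2⟩)
        · exact ⟨hcF, Set.mem_Iic.mpr le_rfl⟩
        · exact ⟨h1, Set.mem_Iic.mpr (le_of_lt (Set.mem_Iio.mp h2))⟩
    rw [hins, Set.ncard_insert_of_notMem (fun h => lt_irrefl c (Set.mem_Iio.mp h.2)) hIiofin]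
  have hS3card : S3.ncard = (F ∩ Set.Ioi d).ncard + 1 := by
    have hins : S3 = insert d (F ∩ Set.Ioi d) := by
      ext p
      constructor
      · rintro ⟨hpF, hpd⟩
        rcases eq_or_lt_of_le (Set.mem_Ici.mp hpd) with h | h
        · exact Or.inl h.symm
        · exact Or.inr ⟨hpF, Set.mem_Ioi.mpr h⟩
      · rintro (rfl | ⟨h1, h2⟩)
        · exact ⟨hdF, Set.mem_Ici.mpr le_rfl⟩
        · exact ⟨h1, Set.mem_Ici.mpr (le_of_lt (Set.mem_Ioi.mp h2))⟩
    rw [hins, Set.ncard_insert_of_notMem (fun h => lt_irrefl d (Set.mem_Ioi.mp h.2)) hIoifin]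
  have hk1le : k1 ≤ S1.ncard := Set.ncard_image_le hS1fin
  have hm1le : m1 ≤ S3.ncard := Set.ncard_image_le hS3fin
  have htot : k1 + (l2 + 2) + m1 ≤ n + 2 := by omega
  -- pointwise comparisons
  have hd1 : ∀ x ∈ Set.Icc a c, dS Q1 x ≤ dS F x := by
    intro x hx
    refine dS_mono hFne ?_
    intro p hp
    rcases le_or_gt p c with hpc | hpc
    · refine ⟨max p a, ⟨p, ⟨hp, hpc⟩, rfl⟩, ?_⟩
      rcases le_total a p with h | h
      · rw [max_eq_left h]
      · rw [max_eq_right h]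
        have := hx.1
        nlinarith
    · refine ⟨c, hcQ1, ?_⟩
      have := hx.2
      nlinarith
  have hd2 : ∀ x ∈ Set.Icc c d, dS Q2 x ≤ dS F x := by
    intro x hx
    refine dS_mono hFne ?_
    intro p hp
    rcases lt_or_ge p c with hpc | hpc
    · refine ⟨c, hcQ2, ?_⟩
      have := hx.1
      nlinarith
    · rcases le_or_gt p d with hpd | hpd
      · exact ⟨p, ⟨hp, hpc, hpd⟩, le_rfl⟩
      · refine ⟨d, hdQ2, ?_⟩
        have := hx.2
        nlinarith
  have hd3 : ∀ x ∈ Set.Icc d b, dS Q3 x ≤ dS F x := by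
    intro x hx
    refine dS_mono hFne ?_
    intro p hp
    rcases lt_or_ge p d with hpd | hpd
    · refine ⟨d, hdQ3, ?_⟩
      have := hx.1
      nlinarith
    · refine ⟨min p b, ⟨p, ⟨hp, hpd⟩, rfl⟩, ?_⟩
      rcases le_total p b with h | h
      · rw [min_eq_left h]
      · rw [min_eq_right h]
        have := hx.2
        nlinarith
  -- lower bounds
  have hlow1 := lowerA k1 hk1pos hac Q1 hQ1fin hQ1sub hcQ1 rfl
  have hlow2 := lowerB l2 Q2 c d hcd hQ2fin hQ2sub hcQ2 hdQ2 (by omega)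
  have hlow3 := lowerA' m1 hm1pos hdb Q3 hQ3fin hQ3sub hdQ3 rfl
  -- integral comparison
  have hcontF : Continuous (dS F) := dS_continuous hFfin hFne
  have hint1 : (∫ x in a..c, dS Q1 x) ≤ ∫ x in a..c, dS F x :=
    intervalIntegral.integral_mono_on hac.le
      ((dS_continuous hQ1fin ⟨c, hcQ1⟩).intervalIntegrable a c)
      (hcontF.intervalIntegrable a c) hd1
  have hint2 : (∫ x in c..d, dS Q2 x) ≤ ∫ x in c..d, dS F x :=
    intervalIntegral.integral_mono_on hcd.le
      ((dS_continuous hQ2fin ⟨c, hcQ2⟩).intervalIntegrable c d)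
      (hcontF.intervalIntegrable c d) hd2
  have hint3 : (∫ x in d..b, dS Q3 x) ≤ ∫ x in d..b, dS F x :=
    intervalIntegral.integral_mono_on hdb.le
      ((dS_continuous hQ3fin ⟨d, hdQ3⟩).intervalIntegrable d b)
      (hcontF.intervalIntegrable d b) hd3
  -- value of the quantization error
  have hFsplit : ∫ x in a..b, dS F x
      = (∫ x in a..c, dS F x) + (∫ x in c..d, dS F x) + (∫ x in d..b, dS F x) := by
    rw [intervalIntegral.integral_add_adjacent_intervals
      (hcontF.intervalIntegrable (μ := volume) a c) (hcontF.intervalIntegrable (μ := volume) c d),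
      intervalIntegral.integral_add_adjacent_intervals
      (hcontF.intervalIntegrable (μ := volume) a d) (hcontF.intervalIntegrable (μ := volume) d b)]
  have hVeq : condQuantError (uniformOn a b) {c, d} n = (b - a)⁻¹ * ((∫ x in a..c, dS F x) + (∫ x in c..d, dS F x)
      + (∫ x in d..b, dS F x)) := by
    rw [← hopt, distortion_eq hab, hFsplit]
  have hcastL : ((l2 + 2 : ℕ) : ℝ) - 1 = (l2:ℝ) + 1 := by push_cast; ring
  have hcompet := compet hac hcd hdb k1 (l2 + 2) m1 hk1pos (by omega) hm1pos htot
  rw [hcastL] at hcompet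
  have hinv : (0:ℝ) < (b - a)⁻¹ := by positivity
  have hsum_le : (∫ x in a..c, dS F x) + (∫ x in c..d, dS F x) + (∫ x in d..b, dS F x)
      ≤ (c - a) ^ 3 / (3 * (2 * (k1:ℝ) - 1) ^ 2) + (d - c) ^ 3 / (12 * ((l2:ℝ) + 1) ^ 2)
        + (b - d) ^ 3 / (3 * (2 * (m1:ℝ) - 1) ^ 2) := by
    rw [hVeq] at hcompet
    exact (mul_le_mul_iff_right₀ hinv).mp hcompet
  have heq1 : (∫ x in a..c, dS Q1 x) = (c - a) ^ 3 / (3 * (2 * (k1:ℝ) - 1) ^ 2) := by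
    linarith [hlow1.1, hlow2.1, hlow3.1, hint1, hint2, hint3]
  have heq2 : (∫ x in c..d, dS Q2 x) = (d - c) ^ 3 / (12 * ((l2:ℝ) + 1) ^ 2) := by
    linarith [hlow1.1, hlow2.1, hlow3.1, hint1, hint2, hint3]
  have heq3 : (∫ x in d..b, dS Q3 x) = (b - d) ^ 3 / (3 * (2 * (m1:ℝ) - 1) ^ 2) := by
    linarith [hlow1.1, hlow2.1, hlow3.1, hint1, hint2, hint3]
  have hIF1 : (∫ x in a..c, dS F x) = (c - a) ^ 3 / (3 * (2 * (k1:ℝ) - 1) ^ 2) := by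
    linarith [hlow1.1, hlow2.1, hlow3.1, hint1, hint2, hint3]
  have hIF2 : (∫ x in c..d, dS F x) = (d - c) ^ 3 / (12 * ((l2:ℝ) + 1) ^ 2) := by
    linarith [hlow1.1, hlow2.1, hlow3.1, hint1, hint2, hint3]
  have hIF3 : (∫ x in d..b, dS F x) = (b - d) ^ 3 / (3 * (2 * (m1:ℝ) - 1) ^ 2) := by
    linarith [hlow1.1, hlow2.1, hlow3.1, hint1, hint2, hint3]
  have hQ1grid := hlow1.2 heq1
  have hQ2grid := hlow2.2 heq2
  have hQ3grid := hlow3.2 heq3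
  have hVval : condQuantError (uniformOn a b) {c, d} n = (b - a)⁻¹ * ((c - a) ^ 3 / (3 * (2 * (k1:ℝ) - 1) ^ 2)
      + (d - c) ^ 3 / (12 * ((l2:ℝ) + 1) ^ 2) + (b - d) ^ 3 / (3 * (2 * (m1:ℝ) - 1) ^ 2)) := by
    rw [hVeq, hIF1, hIF2, hIF3]
  -- no points outside [a, b]
  have hnoleft : ∀ p ∈ F, a ≤ p := by
    intro p hp
    by_contra hpa
    push_neg at hpa
    have haQ1 : a ∈ Q1 := ⟨p, ⟨hp, Set.mem_Iic.mpr (by linarith)⟩, max_eq_right hpa.le⟩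
    rw [hQ1grid] at haQ1
    exact leftGrid_not_mem hac haQ1
  have hnoright : ∀ p ∈ F, p ≤ b := by
    intro p hp
    by_contra hpb
    push_neg at hpb
    have hbQ3 : b ∈ Q3 := ⟨p, ⟨hp, Set.mem_Ici.mpr (by linarith)⟩, min_eq_right hpb.le⟩
    rw [hQ3grid] at hbQ3
    exact rightGrid_not_mem hdb hbQ3
  have hQ1eq : Q1 = F ∩ Set.Icc a c := by
    ext x
    constructor
    · rintro ⟨p, ⟨hpF, hpc⟩, rfl⟩
      show max p a ∈ F ∩ Set.Icc a c
      rw [max_eq_left (hnoleft p hpF)]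
      exact ⟨hpF, Set.mem_Icc.mpr ⟨hnoleft p hpF, Set.mem_Iic.mp hpc⟩⟩
    · rintro ⟨hpF, hpx⟩
      exact ⟨x, ⟨hpF, Set.mem_Iic.mpr (Set.mem_Icc.mp hpx).2⟩, max_eq_left (Set.mem_Icc.mp hpx).1⟩
  have hQ3eq : Q3 = F ∩ Set.Icc d b := by
    ext x
    constructor
    · rintro ⟨p, ⟨hpF, hpd⟩, rfl⟩
      show min p b ∈ F ∩ Set.Icc d b
      rw [min_eq_left (hnoright p hpF)]
      exact ⟨hpF, Set.mem_Icc.mpr ⟨Set.mem_Ici.mp hpd, hnoright p hpF⟩⟩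
    · rintro ⟨hpF, hpx⟩
      exact ⟨x, ⟨hpF, Set.mem_Ici.mpr (Set.mem_Icc.mp hpx).1⟩, min_eq_left (Set.mem_Icc.mp hpx).2⟩
  have hk1k : k1 = k := by rw [hk1, hQ1eq, hkc]
  have hm1m : m1 = m := by rw [hm1, hQ3eq, hmc]
  -- S1 = Q1, S3 = Q3 as sets
  have hS1Q1 : S1.ncard = k1 := by
    have : S1 = Q1 := by
      rw [hQ1eq]
      ext p
      exact ⟨fun ⟨h1, h2⟩ => ⟨h1, Set.mem_Icc.mpr ⟨hnoleft p h1, Set.mem_Iic.mp h2⟩⟩,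
        fun ⟨h1, h2⟩ => ⟨h1, Set.mem_Iic.mpr (Set.mem_Icc.mp h2).2⟩⟩
    rw [this]
  have hS3Q3 : S3.ncard = m1 := by
    have : S3 = Q3 := by
      rw [hQ3eq]
      ext p
      exact ⟨fun ⟨h1, h2⟩ => ⟨h1, Set.mem_Icc.mpr ⟨Set.mem_Ici.mp h2, hnoright p h1⟩⟩,
        fun ⟨h1, h2⟩ => ⟨h1, Set.mem_Ici.mpr (Set.mem_Icc.mp h2).1⟩⟩
    rw [this]
  have e1 : k1 = (F ∩ Set.Iio c).ncard + 1 := by rw [← hS1Q1, hS1card]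
  have e3 : m1 = (F ∩ Set.Ioi d).ncard + 1 := by rw [← hS3Q3, hS3card]
  have hsum_eq : k1 + (l2 + 2) + m1 = F.ncard + 2 := by
    rw [e1, e3, hdecomp, hlc]
    omega
  -- F has exactly n points
  have hFn : F.ncard = n := by
    by_contra hne
    have hFlt : F.ncard + 1 ≤ n := by omega
    have hsum2 : (k1 + 1) + (l2 + 2) + m1 ≤ n + 2 := by omega
    have hcomp2 := compet (n := n) hac hcd hdb (k1 + 1) (l2 + 2) m1 (by omega) (by omega)
      hm1pos hsum2
    rw [hcastL] at hcomp2
    have hcastK : ((k1 + 1 : ℕ) : ℝ) = (k1 : ℝ) + 1 := by push_cast; ring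
    rw [hcastK] at hcomp2
    have hk1R : (1:ℝ) ≤ (k1:ℝ) := by exact_mod_cast hk1pos
    have hca : (0:ℝ) < c - a := by linarith
    have hstrict : (c - a) ^ 3 / (3 * (2 * ((k1:ℝ) + 1) - 1) ^ 2)
        < (c - a) ^ 3 / (3 * (2 * (k1:ℝ) - 1) ^ 2) := by
      apply div_lt_div_of_pos_left (pow_pos hca 3) (by nlinarith) (by nlinarith)
    have hlt := mul_lt_mul_of_pos_left (show
      (c - a) ^ 3 / (3 * (2 * ((k1:ℝ) + 1) - 1) ^ 2)
        + (d - c) ^ 3 / (12 * ((l2:ℝ) + 1) ^ 2) + (b - d) ^ 3 / (3 * (2 * (m1:ℝ) - 1) ^ 2)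
      < (c - a) ^ 3 / (3 * (2 * (k1:ℝ) - 1) ^ 2)
        + (d - c) ^ 3 / (12 * ((l2:ℝ) + 1) ^ 2) + (b - d) ^ 3 / (3 * (2 * (m1:ℝ) - 1) ^ 2)
      from by linarith [hstrict]) hinv
    linarith [hcomp2, hVval.ge, hlt]
  refine ⟨by omega, ?_, ?_, ?_, ?_⟩
  · rw [← hQ1eq, hQ1grid, hk1k]
    rfl
  · rw [hQ2grid]
    rfl
  · rw [← hQ3eq, hQ3grid, hm1m]
    rfl
  · rw [hVval, hk1k, hm1m, hcastL]
    have hkR : (1:ℝ) ≤ (k:ℝ) := by exact_mod_cast hk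
    have hmR : (1:ℝ) ≤ (m:ℝ) := by exact_mod_cast hm
    have h1 : 2 * (k:ℝ) - 1 ≠ 0 := by linarith
    have h2 : (l2:ℝ) + 1 ≠ 0 := by positivity
    have h3 : 2 * (m:ℝ) - 1 ≠ 0 := by linarith
    have h4 : b - a ≠ 0 := by linarith
    exact final_alg _ _ _ _ _ _ _ h1 h2 h3 h4
end

section
/- Let P be the uniform distribution on [a,b] with a < b. For each of the conditional sets β = {a,b}, β = {a}, and β = {b}, the sequence of n-th conditional unconstrained quantization errors V_n(P; β) tends to 0 as n → ∞, and the conditional quantization coefficient exists as a finite positive number and equals (a−b)²/12; that is, lim_{n→∞} n²·V_n(P; β) = (a−b)²/12 for each of the three choices of β. -/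
open MeasureTheory Set Filter
open scoped ENNReal

namespace QA

noncomputable def F (s : Set ℝ) (x : ℝ) : ℝ := sInf ((fun p => (x - p)^2) '' s)

lemma F_bddBelow (s : Set ℝ) (x : ℝ) : BddBelow ((fun p => (x - p)^2) '' s) :=
  ⟨0, fun v hv => by obtain ⟨p, _, hp⟩ := hv; exact hp ▸ sq_nonneg _⟩

lemma F_le (s : Set ℝ) {p : ℝ} (hp : p ∈ s) (x : ℝ) : F s x ≤ (x - p)^2 :=
  csInf_le (F_bddBelow s x) ⟨p, hp, rfl⟩

lemma F_nonneg {s : Set ℝ} (hne : s.Nonempty) (x : ℝ) : 0 ≤ F s x :=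
  le_csInf (hne.image _) (fun v hv => by obtain ⟨p, _, hp⟩ := hv; exact hp ▸ sq_nonneg _)

lemma F_mem {s : Set ℝ} (hs : s.Finite) (hne : s.Nonempty) (x : ℝ) :
    ∃ p ∈ s, F s x = (x - p)^2 := by
  have := (hne.image (fun p => (x-p)^2)).csInf_mem (hs.image _)
  obtain ⟨p, hp, h⟩ := this
  exact ⟨p, hp, h.symm⟩

lemma F_continuous {s : Set ℝ} (hs : s.Finite) (hne : s.Nonempty) : Continuous (F s) := by
  have hne' : hs.toFinset.Nonempty := by simpa using hne
  have heq : F s = fun x => hs.toFinset.inf' hne' (fun p => (x - p)^2) := by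
    funext x
    rw [Finset.inf'_eq_csInf_image]
    unfold F
    congr 1
    rw [hs.coe_toFinset]
  rw [heq]
  exact Continuous.finset_inf'_apply hne' fun p _ => by continuity

lemma distortion_eq {a b : ℝ} (hab : a < b) (s : Set ℝ) :
    distortion (uniformOn a b) s = (b - a)⁻¹ * ∫ x, F s x ∂(volume.restrict (Icc a b)) := by
  unfold distortion uniformOn F
  rw [integral_smul_measure, ENNReal.toReal_inv, ENNReal.toReal_ofReal (by linarith)]
  rfl

-- superlevel set measure lower bound
lemma meas_lower {a b : ℝ} (hab : a < b) {s : Set ℝ} (hs : s.Finite) (hne : s.Nonempty)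
    {m : ℕ} (hcard : s.ncard ≤ m) {t : ℝ} (ht : 0 < t) :
    b - a - 2 * m * Real.sqrt t
      ≤ ((volume.restrict (Icc a b)) {x | t < F s x}).toReal := by
  classical
  set μ := volume.restrict (Icc a b)
  have hFc : Continuous (F s) := F_continuous hs hne
  have hmeas : MeasurableSet {x : ℝ | t < F s x} :=
    measurableSet_lt measurable_const hFc.measurable
  have hrw : μ {x | t < F s x} = volume ({x | t < F s x} ∩ Icc a b) :=
    Measure.restrict_apply hmeas
  set U : Set ℝ := ⋃ p ∈ hs.toFinset, Icc (p - Real.sqrt t) (p + Real.sqrt t) with hU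
  have hsub : Icc a b ⊆ ({x | t < F s x} ∩ Icc a b) ∪ U := by
    intro x hx
    by_cases hxU : x ∈ U
    · exact Or.inr hxU
    · refine Or.inl ⟨?_, hx⟩
      obtain ⟨p, hp, hFx⟩ : ∃ p ∈ s, F s x = (x - p)^2 := by
        have := ((hne.image (fun p => (x-p)^2)).csInf_mem (hs.image _))
        obtain ⟨p, hp, h⟩ := this
        exact ⟨p, hp, h.symm⟩
      have hpx : x ∉ Icc (p - Real.sqrt t) (p + Real.sqrt t) := by
        intro hmem
        exact hxU (Set.mem_biUnion (hs.mem_toFinset.2 hp) hmem)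
      have hst : 0 < Real.sqrt t := Real.sqrt_pos.2 ht
      have habs : Real.sqrt t < |x - p| := by
        rcases not_and_or.1 (fun h => hpx ⟨h.1, h.2⟩) with h | h
        · push_neg at h
          rw [abs_sub_comm, abs_of_pos (by linarith)]
          linarith
        · push_neg at h
          rw [abs_of_pos (by linarith)]
          linarith
      have : t < (x - p)^2 := by
        calc t = Real.sqrt t ^ 2 := (Real.sq_sqrt ht.le).symm
        _ < |x - p| ^ 2 := by
            apply pow_lt_pow_left₀ habs (Real.sqrt_nonneg t) (by norm_num)
        _ = (x - p)^2 := sq_abs _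
      simpa [Set.mem_setOf_eq, hFx] using this
  have hUle : volume U ≤ (m : ℝ≥0∞) * ENNReal.ofReal (2 * Real.sqrt t) := by
    calc volume U ≤ ∑ p ∈ hs.toFinset, volume (Icc (p - Real.sqrt t) (p + Real.sqrt t)) :=
          measure_biUnion_finset_le _ _
    _ = ∑ p ∈ hs.toFinset, ENNReal.ofReal (2 * Real.sqrt t) := by
          apply Finset.sum_congr rfl
          intro p _
          rw [Real.volume_Icc]
          ring_nf
    _ = (hs.toFinset.card : ℝ≥0∞) * ENNReal.ofReal (2 * Real.sqrt t) := by
          rw [Finset.sum_const, nsmul_eq_mul]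
    _ ≤ (m : ℝ≥0∞) * ENNReal.ofReal (2 * Real.sqrt t) := by
          gcongr
          exact_mod_cast (by rwa [Set.ncard_eq_toFinset_card s hs] at hcard)
  have hUtop : volume U ≠ ⊤ := by
    refine ne_top_of_le_ne_top ?_ hUle
    exact ENNReal.mul_ne_top (ENNReal.natCast_ne_top m) ENNReal.ofReal_ne_top
  have hItop : volume ({x | t < F s x} ∩ Icc a b) ≠ ⊤ := by
    refine ne_top_of_le_ne_top ?_ (measure_mono Set.inter_subset_right)
    rw [Real.volume_Icc]; exact ENNReal.ofReal_ne_top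
  have hchain : ENNReal.ofReal (b - a) ≤ volume ({x | t < F s x} ∩ Icc a b) + volume U := by
    rw [← Real.volume_Icc]
    exact le_trans (measure_mono hsub) (measure_union_le _ _)
  have hUreal : (volume U).toReal ≤ 2 * m * Real.sqrt t := by
    have := ENNReal.toReal_mono (ENNReal.mul_ne_top (ENNReal.natCast_ne_top m) ENNReal.ofReal_ne_top) hUle
    rw [ENNReal.toReal_mul, ENNReal.toReal_natCast,
      ENNReal.toReal_ofReal (by positivity)] at this
    linarith
  have hreal : b - a ≤ (volume ({x | t < F s x} ∩ Icc a b)).toReal + (volume U).toReal := by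
    have h1 := ENNReal.toReal_mono (by
      rw [ENNReal.add_ne_top]; exact ⟨hItop, hUtop⟩) hchain
    rwa [ENNReal.toReal_ofReal (by linarith), ENNReal.toReal_add hItop hUtop] at h1
  rw [hrw]
  linarith


lemma H_integral {c : ℝ} (hc : 0 < c) {m : ℕ} (hm : 1 ≤ m) :
    ∫ t in Ioi (0:ℝ), max (c - 2*m*Real.sqrt t) 0 = c^3/(12*m^2) := by
  have hm0 : (0:ℝ) < m := by exact_mod_cast hm
  set w : ℝ := c/(2*m) with hw
  have hw0 : 0 < w := by positivity
  set T : ℝ := w^2 with hT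
  have hT0 : 0 < T := by positivity
  have hsqT : Real.sqrt T = w := Real.sqrt_sq hw0.le
  have h1 : ∫ t in Ioi (0:ℝ), max (c - 2*m*Real.sqrt t) 0
      = ∫ t in Ioc (0:ℝ) T, max (c - 2*m*Real.sqrt t) 0 := by
    apply setIntegral_eq_of_subset_of_ae_diff_eq_zero measurableSet_Ioi.nullMeasurableSet
      (fun x hx => hx.1)
    filter_upwards with t ht
    obtain ⟨ht0, htT⟩ := ht
    have hTt : T < t := by
      by_contra h
      exact htT ⟨ht0, not_lt.1 h⟩
    have : c ≤ 2*m*Real.sqrt t := by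
      have h2 : Real.sqrt T ≤ Real.sqrt t := Real.sqrt_le_sqrt hTt.le
      rw [hsqT] at h2
      calc c = 2*m*w := by rw [hw]; field_simp
      _ ≤ 2*m*Real.sqrt t := by nlinarith
    exact max_eq_right (by linarith)
  have h2 : ∫ t in Ioc (0:ℝ) T, max (c - 2*m*Real.sqrt t) 0
      = ∫ t in Ioc (0:ℝ) T, (c - 2*m*Real.sqrt t) := by
    apply setIntegral_congr_fun measurableSet_Ioc
    intro t ht
    have h2 : Real.sqrt t ≤ w := by
      rw [← hsqT]; exact Real.sqrt_le_sqrt ht.2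
    have : 2*m*Real.sqrt t ≤ c := by
      calc 2*m*Real.sqrt t ≤ 2*m*w := by nlinarith
      _ = c := by rw [hw]; field_simp
    exact max_eq_left (by linarith)
  have hsq : ∫ t in (0:ℝ)..T, Real.sqrt t = ∫ t in (0:ℝ)..T, t ^ ((1:ℝ)/2) := by
    apply intervalIntegral.integral_congr
    intro t ht
    exact Real.sqrt_eq_rpow t
  have hrpow : ∫ t in (0:ℝ)..T, t ^ ((1:ℝ)/2) = (T ^ ((3:ℝ)/2)) / (3/2) := by
    rw [integral_rpow (Or.inl (by norm_num))]
    norm_num [Real.zero_rpow]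
  have hT32 : T ^ ((3:ℝ)/2) = w^3 := by
    rw [hT, ← Real.rpow_natCast w 2, ← Real.rpow_mul hw0.le, ← Real.rpow_natCast w 3]
    norm_num
  rw [h1, h2, ← intervalIntegral.integral_of_le hT0.le]
  rw [intervalIntegral.integral_sub intervalIntegrable_const
    (by apply Continuous.intervalIntegrable; continuity)]
  rw [intervalIntegral.integral_const, intervalIntegral.integral_const_mul, hsq, hrpow, hT32]
  rw [smul_eq_mul, hT, hw]
  have hm' : (m:ℝ) ≠ 0 := hm0.ne'
  field_simp
  ring

lemma distortion_lower {a b : ℝ} (hab : a < b) {s : Set ℝ} (hs : s.Finite) (hne : s.Nonempty)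
    {m : ℕ} (hm : 1 ≤ m) (hcard : s.ncard ≤ m) :
    (b - a)^2 / (12 * m^2) ≤ distortion (uniformOn a b) s := by
  set μ := volume.restrict (Icc a b) with hμ
  have hμuniv : μ Set.univ = ENNReal.ofReal (b - a) := by
    rw [hμ, Measure.restrict_apply_univ, Real.volume_Icc]
  have hμtop : ∀ A : Set ℝ, μ A ≠ ⊤ := fun A =>
    ne_top_of_le_ne_top (by rw [hμuniv]; exact ENNReal.ofReal_ne_top)
      (measure_mono (subset_univ A))
  have hFc := F_continuous hs hne
  have hFi : Integrable (F s) μ := hFc.continuousOn.integrableOn_Icc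
  have hlayer := hFi.integral_eq_integral_meas_lt (Eventually.of_forall (F_nonneg hne))
  set G : ℝ → ℝ := fun t => (μ {x | t < F s x}).toReal with hG
  have hGanti : Antitone G := by
    intro t₁ t₂ h
    apply ENNReal.toReal_mono (hμtop _)
    exact measure_mono (fun x hx => lt_of_le_of_lt h hx)
  have hGnn : ∀ t, 0 ≤ G t := fun t => ENNReal.toReal_nonneg
  have hGle : ∀ t, G t ≤ b - a := by
    intro t
    have := ENNReal.toReal_mono (by rw [hμuniv]; exact ENNReal.ofReal_ne_top)
      (measure_mono (subset_univ {x | t < F s x}))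
    rwa [hμuniv, ENNReal.toReal_ofReal (by linarith)] at this
  obtain ⟨p₀, hp₀⟩ := hne
  set C : ℝ := (a - p₀)^2 + (b - p₀)^2 with hC
  have hGzero : ∀ t, C < t → G t = 0 := by
    intro t ht
    have hemp : {x | t < F s x} ∩ Icc a b = ∅ := by
      ext x
      simp only [mem_inter_iff, mem_setOf_eq, mem_Icc, mem_empty_iff_false, iff_false]
      rintro ⟨hFx, ha, hb⟩
      nlinarith [F_le s hp₀ x, mul_nonneg (sub_nonneg.2 ha) (sub_nonneg.2 hb)]
    have : μ {x | t < F s x} = 0 := by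
      rw [hμ, Measure.restrict_apply (measurableSet_lt measurable_const hFc.measurable), hemp]
      exact measure_empty
    simp only [hG, this, ENNReal.toReal_zero]
  have hGmeas : Measurable G := hGanti.measurable
  have hGint : IntegrableOn G (Ioi (0:ℝ)) volume := by
    apply Integrable.mono' (g := (Ioc (0:ℝ) C).indicator (fun _ => b - a))
    · refine (integrable_indicator_iff measurableSet_Ioc).2 ?_
      exact integrableOn_const (lt_of_le_of_lt (Measure.restrict_apply_le _ _) measure_Ioc_lt_top).ne
    · exact hGmeas.aestronglyMeasurable.restrict
    · filter_upwards [ae_restrict_mem measurableSet_Ioi] with t ht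
      rw [Real.norm_eq_abs, abs_of_nonneg (hGnn t)]
      by_cases htC : t ≤ C
      · rw [Set.indicator_of_mem (Set.mem_Ioc.2 ⟨Set.mem_Ioi.1 ht, htC⟩)]
        exact hGle t
      · rw [Set.indicator_of_notMem (fun h => htC h.2), hGzero t (not_le.1 htC)]
  have hne' : s.Nonempty := ⟨p₀, hp₀⟩
  have hHle : ∫ t in Ioi (0:ℝ), max (b - a - 2*m*Real.sqrt t) 0 ≤ ∫ t in Ioi (0:ℝ), G t := by
    apply integral_mono_of_nonneg
    · filter_upwards with t
      exact le_max_right _ _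
    · exact hGint
    · filter_upwards [ae_restrict_mem measurableSet_Ioi] with t ht
      exact max_le (meas_lower hab hs hne' hcard ht) (hGnn t)
  have hba : (0:ℝ) < b - a := by linarith
  have h3 : (b-a)^3/(12*(m:ℝ)^2) ≤ ∫ x, F s x ∂μ := by
    rw [hlayer, ← H_integral hba hm]
    exact hHle
  rw [distortion_eq hab]
  calc (b-a)^2/(12*(m:ℝ)^2) = (b-a)⁻¹ * ((b-a)^3/(12*(m:ℝ)^2)) := by
        field_simp
  _ ≤ (b-a)⁻¹ * ∫ x, F s x ∂μ := mul_le_mul_of_nonneg_left h3 (by positivity)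

lemma distortion_upper {a b : ℝ} (hab : a < b) {β : Set ℝ} (hβf : β.Finite)
    {m : ℕ} (hm : 1 ≤ m) :
    ∃ α : Set ℝ, α.Finite ∧ α.ncard ≤ m ∧
      distortion (uniformOn a b) (α ∪ β) ≤ (b - a)^2 / (12 * m^2) := by
  classical
  have hm0 : (0:ℝ) < m := by exact_mod_cast hm
  set h : ℝ := (b - a)/m with hh
  have hh0 : 0 < h := div_pos (by linarith) hm0
  set c : ℕ → ℝ := fun k => a + ((k:ℝ) + 1/2) * h with hc
  set αF : Finset ℝ := (Finset.range m).image c with hαF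
  refine ⟨↑αF, αF.finite_toSet, ?_, ?_⟩
  · rw [Set.ncard_coe_finset]
    exact Finset.card_image_le.trans (by simp)
  set s : Set ℝ := ↑αF ∪ β with hset
  have hsf : s.Finite := αF.finite_toSet.union hβf
  have hc0mem : c 0 ∈ s := by
    refine Or.inl (Finset.mem_coe.2 (Finset.mem_image.2 ⟨0, Finset.mem_range.2 hm, rfl⟩))
  have hsne : s.Nonempty := ⟨c 0, hc0mem⟩
  have hFc := F_continuous hsf hsne
  set grid : ℕ → ℝ := fun k => a + (k:ℝ) * h with hgrid
  have hgrid0 : grid 0 = a := by simp [hgrid]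
  have hgridm : grid m = b := by
    simp only [hgrid, hh]
    field_simp
    ring
  have hint : ∀ k, IntervalIntegrable (F s) volume (grid k) (grid (k+1)) :=
    fun k => hFc.intervalIntegrable _ _
  have key : ∀ k, ∫ x in grid k..grid (k+1), (x - c k)^2 = h^3/12 := by
    intro k
    rw [intervalIntegral.integral_comp_sub_right (fun u => u^2) (c k)]
    have e1 : grid k - c k = -(h/2) := by
      simp only [hgrid, hc]
      ring
    have e2 : grid (k+1) - c k = h/2 := by
      simp only [hgrid, hc]
      push_cast
      ring
    rw [e1, e2, integral_pow]
    ring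
  have cell : ∀ k < m, ∫ x in grid k..grid (k+1), F s x ≤ h^3/12 := by
    intro k hk
    rw [← key k]
    apply intervalIntegral.integral_mono_on
    · simp only [hgrid]
      push_cast
      nlinarith
    · exact hint k
    · exact ((continuous_id.sub continuous_const).pow 2).intervalIntegrable _ _
    · intro x _
      refine F_le s ?_ x
      exact Or.inl (Finset.mem_coe.2 (Finset.mem_image.2 ⟨k, Finset.mem_range.2 hk, rfl⟩))
  have hsum : ∫ x in (a:ℝ)..b, F s x = ∑ k ∈ Finset.range m, ∫ x in grid k..grid (k+1), F s x := by
    rw [intervalIntegral.sum_integral_adjacent_intervals (fun k _ => hint k), hgrid0, hgridm]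
  have htot : ∫ x in (a:ℝ)..b, F s x ≤ m * (h^3/12) := by
    rw [hsum]
    calc ∑ k ∈ Finset.range m, ∫ x in grid k..grid (k+1), F s x
        ≤ ∑ _k ∈ Finset.range m, h^3/12 := Finset.sum_le_sum (fun k hk => cell k (Finset.mem_range.1 hk))
    _ = m * (h^3/12) := by
        rw [Finset.sum_const, Finset.card_range, nsmul_eq_mul]
  have hba : (0:ℝ) < b - a := by linarith
  rw [distortion_eq hab]
  have hIcc : ∫ x, F s x ∂(volume.restrict (Icc a b)) = ∫ x in (a:ℝ)..b, F s x := by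
    rw [intervalIntegral.integral_of_le hab.le]
    exact integral_Icc_eq_integral_Ioc
  rw [hIcc]
  calc (b - a)⁻¹ * ∫ x in (a:ℝ)..b, F s x ≤ (b - a)⁻¹ * (m * (h^3/12)) :=
        mul_le_mul_of_nonneg_left htot (by positivity)
  _ = (b - a)^2/(12*m^2) := by
        rw [hh]
        field_simp

lemma distortion_nonneg (P : Measure ℝ) {s : Set ℝ} (hne : s.Nonempty) :
    0 ≤ distortion P s :=
  integral_nonneg (fun x => F_nonneg hne x)

lemma condQuantError_bddBelow (P : Measure ℝ) {β : Set ℝ} (hβne : β.Nonempty) (n : ℕ) :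
    BddBelow { v : ℝ | ∃ α : Set ℝ, α.Finite ∧ α.ncard ≤ n - β.ncard ∧ v = distortion P (α ∪ β) } := by
  refine ⟨0, ?_⟩
  rintro v ⟨α, hαf, hαc, rfl⟩
  exact distortion_nonneg P (hβne.mono Set.subset_union_right)

lemma condQuantError_lower {a b : ℝ} (hab : a < b) {β : Set ℝ} (hβf : β.Finite)
    (hβne : β.Nonempty) {n : ℕ} (hn : β.ncard ≤ n) (hn1 : 1 ≤ n) :
    (b - a)^2/(12*(n:ℝ)^2) ≤ condQuantError (uniformOn a b) β n := by
  apply le_csInf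
  · exact ⟨distortion (uniformOn a b) (∅ ∪ β), ∅, Set.finite_empty, by simp, rfl⟩
  · rintro v ⟨α, hαf, hαc, rfl⟩
    have hsf := hαf.union hβf
    have hsne : (α ∪ β).Nonempty := hβne.mono Set.subset_union_right
    have hcard : (α ∪ β).ncard ≤ n := by
      calc (α ∪ β).ncard ≤ α.ncard + β.ncard := Set.ncard_union_le α β
      _ ≤ (n - β.ncard) + β.ncard := Nat.add_le_add_right hαc _
      _ = n := Nat.sub_add_cancel hn
    have := distortion_lower hab hsf hsne hn1 hcard
    exact le_trans (le_of_eq (by push_cast; ring)) this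

lemma condQuantError_upper {a b : ℝ} (hab : a < b) {β : Set ℝ} (hβf : β.Finite)
    (hβne : β.Nonempty) (hβc : β.ncard ≤ 2) {n : ℕ} (hn : 3 ≤ n) :
    condQuantError (uniformOn a b) β n ≤ (b - a)^2/(12*((n:ℝ)-2)^2) := by
  obtain ⟨α, hαf, hαc, hle⟩ := distortion_upper hab hβf (m := n - 2) (by omega)
  have hmem : distortion (uniformOn a b) (α ∪ β)
      ∈ { v : ℝ | ∃ α : Set ℝ, α.Finite ∧ α.ncard ≤ n - β.ncard ∧ v = distortion (uniformOn a b) (α ∪ β) } :=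
    ⟨α, hαf, hαc.trans (Nat.sub_le_sub_left hβc n), rfl⟩
  refine le_trans (csInf_le (condQuantError_bddBelow _ hβne n) hmem) (le_trans hle (le_of_eq ?_))
  have : (((n - 2 : ℕ)):ℝ) = (n:ℝ) - 2 := by
    have : (2:ℕ) ≤ n := by omega
    push_cast [Nat.cast_sub this]
    ring
  rw [this]

lemma main {a b : ℝ} (hab : a < b) {β : Set ℝ} (hβf : β.Finite) (hβne : β.Nonempty)
    (hβc : β.ncard ≤ 2) :
    Tendsto (fun n : ℕ => condQuantError (uniformOn a b) β n) atTop (nhds 0) ∧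
    Tendsto (fun n : ℕ => (n:ℝ)^2 * condQuantError (uniformOn a b) β n) atTop
      (nhds ((b - a)^2/12)) := by
  have hba : (0:ℝ) < b - a := by linarith
  have hlow : ∀ᶠ n : ℕ in atTop,
      (b - a)^2/(12*(n:ℝ)^2) ≤ condQuantError (uniformOn a b) β n := by
    filter_upwards [eventually_ge_atTop 3] with n hn
    exact condQuantError_lower hab hβf hβne (by omega) (by omega)
  have hup : ∀ᶠ n : ℕ in atTop,
      condQuantError (uniformOn a b) β n ≤ (b - a)^2/(12*((n:ℝ)-2)^2) := by
    filter_upwards [eventually_ge_atTop 3] with n hn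
    exact condQuantError_upper hab hβf hβne hβc hn
  have h1 : Tendsto (fun n : ℕ => (n:ℝ)+1) atTop atTop :=
    tendsto_atTop_add_const_right _ 1 tendsto_natCast_atTop_atTop
  have hU0 : Tendsto (fun n : ℕ => (b-a)^2/(12*((n:ℝ)-2)^2)) atTop (nhds 0) := by
    rw [← Filter.tendsto_add_atTop_iff_nat 3]
    have heq : (fun n : ℕ => (b-a)^2/(12*(((n+3:ℕ):ℝ)-2)^2))
        = fun n : ℕ => (b-a)^2/(12*((n:ℝ)+1)^2) := by
      funext n
      push_cast
      ring_nf
    rw [heq]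
    apply Tendsto.div_atTop tendsto_const_nhds
    apply Tendsto.const_mul_atTop (by norm_num : (0:ℝ) < 12)
    exact (tendsto_pow_atTop (by norm_num : 2 ≠ 0)).comp h1
  have hU2 : Tendsto (fun n : ℕ => (n:ℝ)^2 * ((b-a)^2/(12*((n:ℝ)-2)^2))) atTop
      (nhds ((b-a)^2/12)) := by
    rw [← Filter.tendsto_add_atTop_iff_nat 3]
    have heq : (fun n : ℕ => ((n+3:ℕ):ℝ)^2 * ((b-a)^2/(12*(((n+3:ℕ):ℝ)-2)^2)))
        = fun n : ℕ => (b-a)^2/12 * (1 + 2/((n:ℝ)+1))^2 := by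
      funext n
      have hne : ((n:ℝ)+1) ≠ 0 := by positivity
      have h5 : 1 + 2/((n:ℝ)+1) = ((n:ℝ)+3)/((n:ℝ)+1) := by
        field_simp
        ring
      have key : ∀ (c A B : ℝ), B ≠ 0 → A^2 * (c/(12*B^2)) = c/12 * (A/B)^2 := by
        intro c A B hB
        field_simp
      push_cast
      have e : (n:ℝ) + 3 - 2 = (n:ℝ) + 1 := by ring
      rw [e, h5]
      exact key _ _ _ hne
    rw [heq]
    have h2 : Tendsto (fun n : ℕ => 1 + 2/((n:ℝ)+1)) atTop (nhds 1) := by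
      have h3 := Tendsto.div_atTop (tendsto_const_nhds (x := (2:ℝ))) h1
      simpa using tendsto_const_nhds.add h3
    have h4 := (h2.pow 2).const_mul ((b-a)^2/12)
    simpa using h4
  constructor
  · apply tendsto_of_tendsto_of_tendsto_of_le_of_le' tendsto_const_nhds hU0 ?_ hup
    filter_upwards [hlow] with n hn
    exact le_trans (by positivity) hn
  · apply tendsto_of_tendsto_of_tendsto_of_le_of_le' tendsto_const_nhds hU2
    · filter_upwards [hlow, eventually_ge_atTop 1] with n hn hn1
      have hn0 : (n:ℝ) ≠ 0 := by
        have : (1:ℝ) ≤ n := by exact_mod_cast hn1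
        linarith
      calc (b-a)^2/12 = (n:ℝ)^2 * ((b-a)^2/(12*(n:ℝ)^2)) := by
            field_simp
      _ ≤ (n:ℝ)^2 * condQuantError (uniformOn a b) β n :=
            mul_le_mul_of_nonneg_left hn (by positivity)
    · filter_upwards [hup] with n hn
      exact mul_le_mul_of_nonneg_left hn (by positivity)

end QA

/-- For the uniform distribution on `[a,b]` and each conditional set `{a,b}`, `{a}`, `{b}`,
the conditional quantization errors tend to 0 and the conditional quantization coefficient
exists and equals `(a-b)²/12`. -/
theorem stmt5 (a b : ℝ) (hab : a < b) :
    (Tendsto (fun n : ℕ => condQuantError (uniformOn a b) {a, b} n) atTop (nhds 0)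
      ∧ Tendsto (fun n : ℕ => (n : ℝ) ^ 2 * condQuantError (uniformOn a b) {a, b} n) atTop
          (nhds ((a - b) ^ 2 / 12)))
    ∧ (Tendsto (fun n : ℕ => condQuantError (uniformOn a b) {a} n) atTop (nhds 0)
      ∧ Tendsto (fun n : ℕ => (n : ℝ) ^ 2 * condQuantError (uniformOn a b) {a} n) atTop
          (nhds ((a - b) ^ 2 / 12)))
    ∧ (Tendsto (fun n : ℕ => condQuantError (uniformOn a b) {b} n) atTop (nhds 0)
      ∧ Tendsto (fun n : ℕ => (n : ℝ) ^ 2 * condQuantError (uniformOn a b) {b} n) atTop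
          (nhds ((a - b) ^ 2 / 12))) := by
  have hrw : (a - b)^2/12 = (b - a)^2/12 := by ring
  rw [hrw]
  have h1 : ({a, b} : Set ℝ).Finite := (Set.finite_singleton b).insert a
  have h1c : ({a, b} : Set ℝ).ncard ≤ 2 := by
    calc ({a, b} : Set ℝ).ncard ≤ ({b} : Set ℝ).ncard + 1 := Set.ncard_insert_le a {b}
    _ = 2 := by rw [Set.ncard_singleton]
  refine ⟨QA.main hab h1 ⟨a, Or.inl rfl⟩ h1c, ?_, ?_⟩
  · exact QA.main hab (Set.finite_singleton a) ⟨a, rfl⟩ (by rw [Set.ncard_singleton]; omega)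
  · exact QA.main hab (Set.finite_singleton b) ⟨b, rfl⟩ (by rw [Set.ncard_singleton]; omega)
end

section
/- Let r > 0 and let Q be the uniform distribution on [0, 2πr]. For every n ∈ ℕ with n ≥ 2, the n-th conditional unconstrained quantization error for Q with respect to the conditional set β = {0, 2πr} equals π²r²/(3(n−1)²), and this infimum is attained by the set {(j−1)·2πr/(n−1) : 1 ≤ j ≤ n}. -/
open MeasureTheory Set Filter

lemma contF (t : Finset ℝ) (ht : t.Nonempty) :
    Continuous fun x : ℝ => t.inf' ht (fun a => (x - a) ^ 2) :=
  Continuous.finset_inf'_apply ht (fun a _ => by continuity)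

lemma integral_min_sq {c d : ℝ} (h : c ≤ d) :
    (∫ x in c..d, min ((x - c) ^ 2) ((x - d) ^ 2)) = (d - c) ^ 3 / 12 := by
  have hcont : Continuous fun x : ℝ => min ((x - c) ^ 2) ((x - d) ^ 2) :=
    Continuous.min (by continuity) (by continuity)
  set m := (c + d) / 2 with hm
  have hcm : c ≤ m := by rw [hm]; linarith
  have hmd : m ≤ d := by rw [hm]; linarith
  have h1 : (∫ x in c..m, min ((x - c) ^ 2) ((x - d) ^ 2)) = ∫ x in c..m, (x - c) ^ 2 := by
    apply intervalIntegral.integral_congr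
    intro x hx
    rw [Set.uIcc_of_le hcm] at hx
    have : (x - c) ^ 2 ≤ (x - d) ^ 2 := by nlinarith [hx.1, hx.2]
    simp [min_eq_left this]
  have h2 : (∫ x in m..d, min ((x - c) ^ 2) ((x - d) ^ 2)) = ∫ x in m..d, (x - d) ^ 2 := by
    apply intervalIntegral.integral_congr
    intro x hx
    rw [Set.uIcc_of_le hmd] at hx
    have : (x - d) ^ 2 ≤ (x - c) ^ 2 := by nlinarith [hx.1, hx.2]
    simp [min_eq_right this]
  have e1 : (∫ x in c..m, (x - c) ^ 2) = (m - c) ^ 3 / 3 := by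
    rw [intervalIntegral.integral_comp_sub_right (fun x => x ^ 2) c, integral_pow]
    norm_num
  have e2 : (∫ x in m..d, (x - d) ^ 2) = -((m - d) ^ 3) / 3 := by
    rw [intervalIntegral.integral_comp_sub_right (fun x => x ^ 2) d, integral_pow]
    norm_num
  have hsplit := intervalIntegral.integral_add_adjacent_intervals (μ := volume)
    (hcont.intervalIntegrable c m) (hcont.intervalIntegrable m d)
  rw [← hsplit, h1, h2, e1, e2, hm]
  ring

lemma distortion_finset {L : ℝ} (hL : 0 < L) (t : Finset ℝ) (ht : t.Nonempty) :
    distortion (uniformOn 0 L) ↑t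
      = L⁻¹ * ∫ x in (0:ℝ)..L, t.inf' ht (fun a => (x - a) ^ 2) := by
  have key : ∀ x : ℝ, sInf ((fun a => (x - a) ^ 2) '' (↑t : Set ℝ))
      = t.inf' ht (fun a => (x - a) ^ 2) := fun x =>
    (Finset.inf'_eq_csInf_image t ht _).symm
  unfold distortion uniformOn
  simp_rw [key]
  rw [integral_smul_measure, ENNReal.toReal_inv, ENNReal.toReal_ofReal (by linarith)]
  rw [MeasureTheory.integral_Icc_eq_integral_Ioc, ← intervalIntegral.integral_of_le hL.le]
  rw [sub_zero, smul_eq_mul]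

lemma LB {L : ℝ} (hL : 0 < L) {n : ℕ} (hn : 2 ≤ n) (t : Finset ℝ)
    (h0 : (0:ℝ) ∈ t) (hLt : L ∈ t) (hsub : ↑t ⊆ Set.Icc (0:ℝ) L) (hcard : t.card ≤ n) :
    L ^ 3 / (12 * ((n:ℝ) - 1) ^ 2)
      ≤ ∫ x in (0:ℝ)..L, t.inf' ⟨0, h0⟩ (fun a => (x - a) ^ 2) := by
  classical
  set f : ℝ → ℝ := fun x => t.inf' ⟨0, h0⟩ (fun a => (x - a) ^ 2) with hf
  have hfc : Continuous f := contF t ⟨0, h0⟩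
  set m := t.card with hm
  have hm2 : 2 ≤ m := by
    have hsubp : ({0, L} : Finset ℝ) ⊆ t := by
      intro x hx
      simp only [Finset.mem_insert, Finset.mem_singleton] at hx
      rcases hx with rfl | rfl <;> assumption
    have : ({0, L} : Finset ℝ).card = 2 := by
      rw [Finset.card_insert_of_notMem (by simp [hL.ne]), Finset.card_singleton]
    rw [hm, ← this]
    exact Finset.card_le_card hsubp
  have hmpos : 0 < m := by omega
  set a := t.orderEmbOfFin (rfl : t.card = m) with ha
  set b : ℕ → ℝ := fun k => if h : k < m then a ⟨k, h⟩ else L with hb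
  have hbmem : ∀ k, b k ∈ t := by
    intro k
    by_cases h : k < m
    · simp only [hb, dif_pos h]; exact t.orderEmbOfFin_mem _ _
    · simp only [hb, dif_neg h]; exact hLt
  have hbicc : ∀ k, b k ∈ Set.Icc (0:ℝ) L := fun k => hsub (hbmem k)
  have hbmono : Monotone b := by
    intro k l hkl
    by_cases h1 : k < m <;> by_cases h2 : l < m
    · simp only [hb, dif_pos h1, dif_pos h2]; exact a.monotone (by exact hkl)
    · simp only [hb, dif_pos h1, dif_neg h2]; exact (hsub (t.orderEmbOfFin_mem _ _)).2
    · omega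
    · simp only [hb, dif_neg h1, dif_neg h2]; exact le_refl L
  have hb0 : b 0 = 0 := by
    have hmin : t.min' ⟨0, h0⟩ = 0 :=
      le_antisymm (Finset.min'_le t 0 h0) (Finset.le_min' t _ _ fun y hy => (hsub hy).1)
    simp only [hb, dif_pos hmpos]
    rw [Finset.orderEmbOfFin_zero rfl hmpos, hmin]
  have hblast : b (m - 1) = L := by
    have hmax : t.max' ⟨0, h0⟩ = L :=
      le_antisymm (Finset.max'_le t _ _ fun y hy => (hsub hy).2) (Finset.le_max' t L hLt)
    simp only [hb, dif_pos (by omega : m - 1 < m)]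
    rw [Finset.orderEmbOfFin_last rfl hmpos, hmax]
  have hnogap : ∀ c ∈ t, ∀ k, k + 1 < m → c ≤ b k ∨ b (k + 1) ≤ c := by
    intro c hc k hk
    have : c ∈ Set.range a := by rw [Finset.range_orderEmbOfFin]; exact hc
    obtain ⟨j, rfl⟩ := this
    rcases le_or_gt (j : ℕ) k with hjk | hjk
    · left
      simp only [hb, dif_pos (by omega : k < m)]
      exact a.monotone (by exact hjk)
    · right
      simp only [hb, dif_pos hk]
      exact a.monotone (by exact hjk)
  have hcell : ∀ k, k + 1 < m →
      (b (k + 1) - b k) ^ 3 / 12 ≤ ∫ x in b k..b (k + 1), f x := by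
    intro k hk
    have hle : b k ≤ b (k + 1) := hbmono (Nat.le_succ k)
    have hmin_cont : Continuous fun x : ℝ => min ((x - b k) ^ 2) ((x - b (k + 1)) ^ 2) :=
      Continuous.min (by continuity) (by continuity)
    have hpt : ∀ x ∈ Set.Icc (b k) (b (k + 1)),
        min ((x - b k) ^ 2) ((x - b (k + 1)) ^ 2) ≤ f x := by
      intro x hx
      rw [hf]
      apply Finset.le_inf'
      intro c hc
      rcases hnogap c hc k hk with h1 | h1
      · refine le_trans (min_le_left _ _) ?_
        nlinarith [hx.1, hx.2]
      · refine le_trans (min_le_right _ _) ?_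
        nlinarith [hx.1, hx.2]
    calc (b (k + 1) - b k) ^ 3 / 12
        = ∫ x in b k..b (k + 1), min ((x - b k) ^ 2) ((x - b (k + 1)) ^ 2) :=
          (integral_min_sq hle).symm
      _ ≤ ∫ x in b k..b (k + 1), f x :=
          intervalIntegral.integral_mono_on hle (hmin_cont.intervalIntegrable _ _)
            (hfc.intervalIntegrable _ _) hpt
  have hsum : ∑ k ∈ Finset.range (m - 1), ∫ x in b k..b (k + 1), f x
      = ∫ x in (0:ℝ)..L, f x := by
    rw [intervalIntegral.sum_integral_adjacent_intervals
      (fun k _ => hfc.intervalIntegrable _ _)]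
    rw [hb0, hblast]
  have htel : ∑ k ∈ Finset.range (m - 1), (b (k + 1) - b k) = L := by
    rw [Finset.sum_range_sub b (m - 1), hb0, hblast, sub_zero]
  have hjensen : L ^ 3 / ((m:ℝ) - 1) ^ 2
      ≤ ∑ k ∈ Finset.range (m - 1), (b (k + 1) - b k) ^ 3 := by
    have := pow_sum_div_card_le_sum_pow (s := Finset.range (m - 1))
      (f := fun k => b (k + 1) - b k)
      (fun i _ => sub_nonneg.2 (hbmono (Nat.le_succ i))) 2
    rw [htel, Finset.card_range] at this
    have hcast : ((m - 1 : ℕ) : ℝ) = (m : ℝ) - 1 := by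
      have : (1:ℕ) ≤ m := by omega
      push_cast [this]
      ring
    rw [hcast] at this
    exact this
  have hmn : ((m:ℝ) - 1) ^ 2 ≤ ((n:ℝ) - 1) ^ 2 := by
    have h1 : (m:ℝ) ≤ (n:ℝ) := Nat.cast_le.2 hcard
    have h2 : (1:ℝ) ≤ (m:ℝ) := by exact_mod_cast Nat.one_le_of_lt hm2
    nlinarith
  have hden : (0:ℝ) < ((m:ℝ) - 1) ^ 2 := by
    have h2 : (2:ℝ) ≤ (m:ℝ) := by exact_mod_cast hm2
    nlinarith
  have hden' : (0:ℝ) < ((n:ℝ) - 1) ^ 2 := lt_of_lt_of_le hden hmn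
  calc L ^ 3 / (12 * ((n:ℝ) - 1) ^ 2)
      ≤ L ^ 3 / (12 * ((m:ℝ) - 1) ^ 2) := by gcongr
    _ = (L ^ 3 / ((m:ℝ) - 1) ^ 2) / 12 := by rw [div_div, mul_comm]
    _ ≤ (∑ k ∈ Finset.range (m - 1), (b (k + 1) - b k) ^ 3) / 12 := by
        gcongr
    _ = ∑ k ∈ Finset.range (m - 1), (b (k + 1) - b k) ^ 3 / 12 := by
        rw [Finset.sum_div]
    _ ≤ ∑ k ∈ Finset.range (m - 1), ∫ x in b k..b (k + 1), f x := by
        apply Finset.sum_le_sum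
        intro k hk
        exact hcell k (by simp at hk; omega)
    _ = ∫ x in (0:ℝ)..L, f x := hsum

lemma grid_UB {L : ℝ} (hL : 0 < L) {n : ℕ} (hn : 2 ≤ n)
    (G : Finset ℝ) (hG : ∀ k : ℕ, k ≤ n - 1 → (k : ℝ) * L / ((n:ℝ) - 1) ∈ G)
    (hGne : G.Nonempty) :
    (∫ x in (0:ℝ)..L, G.inf' hGne (fun a => (x - a) ^ 2))
      ≤ L ^ 3 / (12 * ((n:ℝ) - 1) ^ 2) := by
  have hn1 : (0:ℝ) < (n:ℝ) - 1 := by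
    have : (2:ℝ) ≤ (n:ℝ) := by exact_mod_cast hn
    linarith
  set f : ℝ → ℝ := fun x => G.inf' hGne (fun a => (x - a) ^ 2) with hf
  have hfc : Continuous f := contF G hGne
  set c : ℕ → ℝ := fun k => (k : ℝ) * L / ((n:ℝ) - 1) with hc
  have hc0 : c 0 = 0 := by simp [hc]
  have hclast : c (n - 1) = L := by
    simp only [hc]
    rw [Nat.cast_sub (by omega), Nat.cast_one]
    field_simp
  have hgap : ∀ k : ℕ, c (k + 1) - c k = L / ((n:ℝ) - 1) := by
    intro k
    simp only [hc]
    push_cast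
    field_simp
    ring
  have hcle : ∀ k : ℕ, c k ≤ c (k + 1) := by
    intro k
    nlinarith [hgap k, div_pos hL hn1]
  have hcell : ∀ k, k + 1 ≤ n - 1 →
      (∫ x in c k..c (k + 1), f x) ≤ (L / ((n:ℝ) - 1)) ^ 3 / 12 := by
    intro k hk
    have hkG : c k ∈ G := hG k (by omega)
    have hk1G : c (k + 1) ∈ G := hG (k + 1) hk
    have hmin_cont : Continuous fun x : ℝ => min ((x - c k) ^ 2) ((x - c (k + 1)) ^ 2) :=
      Continuous.min (by continuity) (by continuity)
    have hpt : ∀ x ∈ Set.Icc (c k) (c (k + 1)),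
        f x ≤ min ((x - c k) ^ 2) ((x - c (k + 1)) ^ 2) := by
      intro x _
      exact le_min (Finset.inf'_le _ hkG) (Finset.inf'_le _ hk1G)
    calc (∫ x in c k..c (k + 1), f x)
        ≤ ∫ x in c k..c (k + 1), min ((x - c k) ^ 2) ((x - c (k + 1)) ^ 2) :=
          intervalIntegral.integral_mono_on (hcle k) (hfc.intervalIntegrable _ _)
            (hmin_cont.intervalIntegrable _ _) hpt
      _ = (c (k + 1) - c k) ^ 3 / 12 := integral_min_sq (hcle k)
      _ = (L / ((n:ℝ) - 1)) ^ 3 / 12 := by rw [hgap]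
  have hsum : ∑ k ∈ Finset.range (n - 1), ∫ x in c k..c (k + 1), f x
      = ∫ x in (0:ℝ)..L, f x := by
    rw [intervalIntegral.sum_integral_adjacent_intervals
      (fun k _ => hfc.intervalIntegrable _ _)]
    rw [hc0, hclast]
  calc (∫ x in (0:ℝ)..L, f x)
      = ∑ k ∈ Finset.range (n - 1), ∫ x in c k..c (k + 1), f x := hsum.symm
    _ ≤ ∑ _k ∈ Finset.range (n - 1), (L / ((n:ℝ) - 1)) ^ 3 / 12 := by
        apply Finset.sum_le_sum
        intro k hk
        exact hcell k (by simp at hk; omega)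
    _ = ((n - 1 : ℕ) : ℝ) * ((L / ((n:ℝ) - 1)) ^ 3 / 12) := by
        rw [Finset.sum_const, Finset.card_range, nsmul_eq_mul]
    _ = L ^ 3 / (12 * ((n:ℝ) - 1) ^ 2) := by
        rw [Nat.cast_sub (by omega)]
        push_cast
        field_simp

/-- Conditional quantization for the uniform distribution on `[0, 2πr]` with conditional set
`{0, 2πr}`: the error is `π²r²/(3(n-1)²)`, attained by `{(j-1)·2πr/(n-1) : 1 ≤ j ≤ n}`. -/
theorem stmt7 (r : ℝ) (hr : 0 < r) (n : ℕ) (hn : 2 ≤ n) :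
    condQuantError (uniformOn 0 (2 * Real.pi * r)) {0, 2 * Real.pi * r} n
      = Real.pi ^ 2 * r ^ 2 / (3 * ((n : ℝ) - 1) ^ 2)
    ∧ distortion (uniformOn 0 (2 * Real.pi * r))
        ((fun j : ℕ => ((j : ℝ) - 1) * (2 * Real.pi * r) / ((n : ℝ) - 1)) '' Set.Icc 1 n)
      = Real.pi ^ 2 * r ^ 2 / (3 * ((n : ℝ) - 1) ^ 2) := by
  set L : ℝ := 2 * Real.pi * r with hLdef
  have hL : 0 < L := by
    have := Real.pi_pos
    rw [hLdef]; positivity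
  have hn1 : (0:ℝ) < (n:ℝ) - 1 := by
    have : (2:ℝ) ≤ (n:ℝ) := by exact_mod_cast hn
    linarith
  set G : Finset ℝ := (Finset.Icc 1 n).image (fun j : ℕ => ((j:ℝ) - 1) * L / ((n:ℝ) - 1))
    with hGdef
  have hGcoe : (↑G : Set ℝ) = (fun j : ℕ => ((j:ℝ) - 1) * L / ((n:ℝ) - 1)) '' Set.Icc 1 n := by
    rw [hGdef, Finset.coe_image, Finset.coe_Icc]
  have hmemG : ∀ k : ℕ, k ≤ n - 1 → (k:ℝ) * L / ((n:ℝ) - 1) ∈ G := by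
    intro k hk
    rw [hGdef]
    refine Finset.mem_image.2 ⟨k + 1, Finset.mem_Icc.2 ⟨by omega, by omega⟩, ?_⟩
    push_cast
    ring
  have h0G : (0:ℝ) ∈ G := by
    have := hmemG 0 (by omega)
    simpa using this
  have hLG : L ∈ G := by
    have h := hmemG (n - 1) le_rfl
    rwa [show ((n - 1 : ℕ):ℝ) * L / ((n:ℝ) - 1) = L by
      rw [Nat.cast_sub (by omega)]; push_cast; field_simp] at h
  have hGsub : (↑G : Set ℝ) ⊆ Set.Icc (0:ℝ) L := by
    intro x hx
    rw [hGdef] at hx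
    simp only [Finset.coe_image, Set.mem_image, Finset.mem_coe, Finset.mem_Icc] at hx
    obtain ⟨j, ⟨hj1, hjn⟩, rfl⟩ := hx
    have hj1' : (1:ℝ) ≤ (j:ℝ) := by exact_mod_cast hj1
    have hjn' : (j:ℝ) ≤ (n:ℝ) := by exact_mod_cast hjn
    constructor
    · exact div_nonneg (mul_nonneg (by linarith) hL.le) hn1.le
    · rw [div_le_iff₀ hn1]
      nlinarith
  have hGcard : G.card ≤ n := le_trans Finset.card_image_le (by simp)
  have hGne : G.Nonempty := ⟨0, h0G⟩
  have hint : (∫ x in (0:ℝ)..L, G.inf' hGne (fun a => (x - a) ^ 2))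
      = L ^ 3 / (12 * ((n:ℝ) - 1) ^ 2) :=
    le_antisymm (grid_UB hL hn G hmemG hGne) (LB hL hn G h0G hLG hGsub hGcard)
  have hVval : L⁻¹ * (L ^ 3 / (12 * ((n:ℝ) - 1) ^ 2))
      = Real.pi ^ 2 * r ^ 2 / (3 * ((n:ℝ) - 1) ^ 2) := by
    rw [hLdef]
    field_simp
    ring
  have hdist : distortion (uniformOn 0 L) ↑G
      = Real.pi ^ 2 * r ^ 2 / (3 * ((n:ℝ) - 1) ^ 2) := by
    rw [distortion_finset hL G hGne, hint, hVval]
  refine ⟨?_, by rwa [← hGcoe]⟩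
  -- condQuantError part
  have hβ : ({0, L} : Set ℝ).ncard = 2 := Set.ncard_pair hL.ne
  have hβsub : ({0, L} : Set ℝ) ⊆ ↑G := by
    intro x hx
    rcases hx with rfl | hx
    · exact h0G
    · rw [Set.mem_singleton_iff] at hx; subst hx; exact hLG
  unfold condQuantError
  rw [hβ]
  apply IsLeast.csInf_eq
  constructor
  · -- membership
    refine ⟨(↑G : Set ℝ) \ {0, L}, (G.finite_toSet).diff, ?_, ?_⟩
    · have heq : (↑G : Set ℝ) \ {0, L} = ↑((G.erase 0).erase L) := by
        rw [Finset.coe_erase, Finset.coe_erase, Set.diff_diff, Set.singleton_union]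
      rw [heq, Set.ncard_coe_finset]
      have h1 : L ∈ G.erase 0 := Finset.mem_erase.2 ⟨hL.ne', hLG⟩
      rw [Finset.card_erase_of_mem h1, Finset.card_erase_of_mem h0G]
      omega
    · rw [Set.diff_union_of_subset hβsub, hdist]
  · -- lower bound
    rintro v ⟨α, hαfin, hαcard, rfl⟩
    have hsfin : (α ∪ {0, L} : Set ℝ).Finite :=
      hαfin.union ((Set.finite_singleton L).insert 0)
    set t : Finset ℝ := hsfin.toFinset with htdef
    have hcoe : (↑t : Set ℝ) = α ∪ {0, L} := hsfin.coe_toFinset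
    have h0t : (0:ℝ) ∈ t := by
      rw [htdef, Set.Finite.mem_toFinset]
      exact Or.inr (Or.inl rfl)
    have hLt : L ∈ t := by
      rw [htdef, Set.Finite.mem_toFinset]
      exact Or.inr (Or.inr rfl)
    have htcard : t.card ≤ n := by
      have h1 : t.card = (α ∪ {0, L} : Set ℝ).ncard := by
        rw [← hcoe, Set.ncard_coe_finset]
      have h2 : (α ∪ {0, L} : Set ℝ).ncard ≤ α.ncard + ({0, L} : Set ℝ).ncard :=
        Set.ncard_union_le _ _
      rw [hβ] at h2
      omega
    -- projection
    set p : ℝ → ℝ := fun y => max 0 (min y L) with hp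
    set t' : Finset ℝ := t.image p with ht'def
    have h0t' : (0:ℝ) ∈ t' := by
      have : p 0 = 0 := by
        rw [hp]; simp [min_eq_left hL.le]
      rw [ht'def, ← this]
      exact Finset.mem_image_of_mem p h0t
    have hLt' : L ∈ t' := by
      have : p L = L := by
        rw [hp]; simp [hL.le]
      rw [ht'def, ← this]
      exact Finset.mem_image_of_mem p hLt
    have ht'ne : t'.Nonempty := ⟨0, h0t'⟩
    have ht'sub : (↑t' : Set ℝ) ⊆ Set.Icc (0:ℝ) L := by
      intro x hx
      rw [ht'def] at hx
      simp only [Finset.coe_image, Set.mem_image, Finset.mem_coe] at hx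
      obtain ⟨y, _, rfl⟩ := hx
      exact ⟨le_max_left _ _, max_le hL.le (min_le_right _ _)⟩
    have ht'card : t'.card ≤ n := le_trans Finset.card_image_le htcard
    have hproj : ∀ x ∈ Set.Icc (0:ℝ) L, ∀ b : ℝ, (x - p b) ^ 2 ≤ (x - b) ^ 2 := by
      intro x hx b
      simp only [hp]
      rcases le_total b 0 with hb | hb
      · rw [min_eq_left (le_trans hb hL.le), max_eq_left hb]
        nlinarith [hx.1, hx.2]
      · rcases le_total L b with hb2 | hb2
        · rw [min_eq_right hb2, max_eq_right hL.le]
          nlinarith [hx.1, hx.2]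
        · rw [min_eq_left hb2, max_eq_right hb]
    have hpt : ∀ x ∈ Set.Icc (0:ℝ) L,
        t'.inf' ht'ne (fun a => (x - a) ^ 2) ≤ t.inf' ⟨0, h0t⟩ (fun a => (x - a) ^ 2) := by
      intro x hx
      apply Finset.le_inf'
      intro b hb
      exact le_trans (Finset.inf'_le _ (Finset.mem_image_of_mem p hb)) (hproj x hx b)
    have hmono : (∫ x in (0:ℝ)..L, t'.inf' ht'ne (fun a => (x - a) ^ 2))
        ≤ ∫ x in (0:ℝ)..L, t.inf' ⟨0, h0t⟩ (fun a => (x - a) ^ 2) :=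
      intervalIntegral.integral_mono_on hL.le ((contF t' ht'ne).intervalIntegrable _ _)
        ((contF t ⟨0, h0t⟩).intervalIntegrable _ _) hpt
    have hLB := LB hL hn t' h0t' hLt' ht'sub ht'card
    have hdisteq : distortion (uniformOn 0 L) (α ∪ {0, L})
        = L⁻¹ * ∫ x in (0:ℝ)..L, t.inf' ⟨0, h0t⟩ (fun a => (x - a) ^ 2) := by
      rw [← hcoe]
      exact distortion_finset hL t ⟨0, h0t⟩
    rw [hdisteq, ← hVval]
    apply mul_le_mul_of_nonneg_left (le_trans hLB hmono) (by positivity)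
end
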